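/- arXiv:math/0703816 — 4 statements merged into one kernel-verified Lean document; each statement's English description precedes it below -/
import Mathlib

section
/- Let T > 0 and let q : ℝ → ℝ be continuous with q(t) ≤ (2π)²/T² for all t ∈ [0,T], with strict inequality on a set of positive measure. Then the only solution x of x'' + q(t)x = 0 on [0,T] satisfying x(0) = x(T) = 0 and sgn x'(0) = sgn x'(T) is the trivial solution x ≡ 0. -/
open Real MeasureTheory Set Filter Topology

namespace Stmt1Aux

lemma smooth2 {x : ℝ → ℝ} (hx : ContDiff ℝ 2 x) : Differentiable ℝ (deriv x) := by
  have h : ContDiff ℝ (1 + 1) x := by norm_num at hx ⊢; exact hx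
  exact (contDiff_succ_iff_deriv.mp h).2.2.differentiable one_ne_zero

/-- Uniqueness: a solution with a double zero vanishes identically. -/
lemma uniq (T : ℝ) (hT : 0 < T) (q : ℝ → ℝ) (hq : Continuous q)
    (x : ℝ → ℝ) (hx : ContDiff ℝ 2 x)
    (hode : ∀ t ∈ Icc (0 : ℝ) T, deriv (deriv x) t + q t * x t = 0)
    (t₀ : ℝ) (ht₀ : t₀ ∈ Icc (0 : ℝ) T) (h0 : x t₀ = 0) (h1 : deriv x t₀ = 0) :
    ∀ t ∈ Icc (0 : ℝ) T, x t = 0 := by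
  obtain ⟨M, hM⟩ := (isCompact_Icc (a := (0:ℝ)) (b := T)).exists_bound_of_continuousOn
    hq.continuousOn
  set K := 1 + max M 0 with hK
  have hKnn : ∀ t ∈ Icc (0:ℝ) T, |q t| ≤ K := by
    intro t ht
    have := hM t ht
    rw [Real.norm_eq_abs] at this
    calc |q t| ≤ M := this
    _ ≤ K := by rw [hK]; have := le_max_left M 0; linarith
  set E := fun t => (x t) ^ 2 + (deriv x t) ^ 2 with hEdef
  have hd1 : Differentiable ℝ x := hx.differentiable two_ne_zero
  have hd2 : Differentiable ℝ (deriv x) := smooth2 hx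
  have hE' : ∀ t, HasDerivAt E
      (2 * x t * deriv x t + 2 * deriv x t * deriv (deriv x) t) t := by
    intro t
    have h1 : HasDerivAt (fun s => (x s) ^ 2) (2 * x t * deriv x t) t := by
      simpa [mul_comm] using ((hd1 t).hasDerivAt.fun_pow 2)
    have h2 : HasDerivAt (fun s => (deriv x s) ^ 2)
        (2 * deriv x t * deriv (deriv x) t) t := by
      simpa [mul_comm] using ((hd2 t).hasDerivAt.fun_pow 2)
    simpa using h1.fun_add h2
  have hEnn : ∀ t, 0 ≤ E t := fun t => by positivity
  have hbound : ∀ t ∈ Icc (0:ℝ) T,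
      |2 * x t * deriv x t + 2 * deriv x t * deriv (deriv x) t| ≤ K * E t := by
    intro t ht
    have hode' : deriv (deriv x) t = -(q t * x t) := by linarith [hode t ht]
    rw [hode']
    have h2 : |2 * x t * deriv x t + 2 * deriv x t * -(q t * x t)|
        ≤ 2 * |x t| * |deriv x t| * (1 + |q t|) := by
      have habs : |2 * x t * deriv x t + 2 * deriv x t * -(q t * x t)|
          ≤ |2 * x t * deriv x t| + |2 * deriv x t * -(q t * x t)| := abs_add_le _ _
      have e1 : |2 * x t * deriv x t| = 2 * |x t| * |deriv x t| := by
        rw [abs_mul, abs_mul]; simp [abs_of_nonneg]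
      have e2 : |2 * deriv x t * -(q t * x t)| = 2 * |deriv x t| * (|q t| * |x t|) := by
        rw [abs_mul, abs_mul, abs_neg, abs_mul]; simp
      rw [e1, e2] at habs
      nlinarith [abs_nonneg (x t), abs_nonneg (deriv x t), abs_nonneg (q t)]
    have h3 : 2 * |x t| * |deriv x t| ≤ E t := by
      show 2 * |x t| * |deriv x t| ≤ x t ^ 2 + deriv x t ^ 2
      have := sq_nonneg (|x t| - |deriv x t|)
      have e1 : |x t| ^ 2 = (x t) ^ 2 := sq_abs _
      have e2 : |deriv x t| ^ 2 = (deriv x t) ^ 2 := sq_abs _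
      nlinarith
    have hqM : |q t| ≤ M := by have := hM t ht; rwa [Real.norm_eq_abs] at this
    have hq1 : 1 + |q t| ≤ K := by
      rw [hK]; have := le_max_left M 0; linarith
    calc |2 * x t * deriv x t + 2 * deriv x t * -(q t * x t)|
        ≤ 2 * |x t| * |deriv x t| * (1 + |q t|) := h2
      _ ≤ E t * K := by
          apply mul_le_mul h3 hq1 (by positivity) (hEnn t)
      _ = K * E t := mul_comm _ _
  -- Gronwall forward on [t₀, T] and backward on [0, t₀]
  have hE0 : E t₀ = 0 := by rw [hEdef]; simp [h0, h1]
  have fwd : ∀ t ∈ Icc t₀ T, E t = 0 := by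
    intro t ht
    have hg := norm_le_gronwallBound_of_norm_deriv_right_le (f := E)
      (f' := fun t => 2 * x t * deriv x t + 2 * deriv x t * deriv (deriv x) t)
      (δ := 0) (K := K) (ε := 0) (a := t₀) (b := T)
      (fun s hs => ((hE' s).continuousAt).continuousWithinAt)
      (fun s hs => (hE' s).hasDerivWithinAt)
      (by simp [hE0]) ?_ t ht
    · rw [gronwallBound_ε0_δ0] at hg
      have := hEnn t
      rw [Real.norm_eq_abs, abs_of_nonneg this] at hg
      linarith
    · intro s hs
      rw [Real.norm_eq_abs, Real.norm_eq_abs, abs_of_nonneg (hEnn s), add_zero]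
      exact hbound s ⟨le_trans ht₀.1 hs.1, le_of_lt hs.2⟩
  have bwd : ∀ t ∈ Icc 0 t₀, E t = 0 := by
    intro t ht
    set G := fun s => E (t₀ - s) with hGdef
    have hG' : ∀ s, HasDerivAt G
        (-(2 * x (t₀ - s) * deriv x (t₀ - s)
          + 2 * deriv x (t₀ - s) * deriv (deriv x) (t₀ - s))) s := by
      intro s
      have hlin : HasDerivAt (fun u : ℝ => t₀ - u) (-1) s := by
        simpa using (hasDerivAt_id s).const_sub t₀
      have := (hE' (t₀ - s)).comp s hlin
      rw [show G = E ∘ HSub.hSub t₀ from rfl]; simpa [mul_comm] using this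
    have hg := norm_le_gronwallBound_of_norm_deriv_right_le (f := G)
      (f' := fun s => -(2 * x (t₀ - s) * deriv x (t₀ - s)
        + 2 * deriv x (t₀ - s) * deriv (deriv x) (t₀ - s)))
      (δ := 0) (K := K) (ε := 0) (a := 0) (b := t₀)
      (fun s hs => ((hG' s).continuousAt).continuousWithinAt)
      (fun s hs => (hG' s).hasDerivWithinAt)
      (by simp [hGdef, hE0]) ?_ (t₀ - t) ⟨by linarith [ht.2], by linarith [ht.1]⟩
    · rw [gronwallBound_ε0_δ0] at hg
      have h5 : G (t₀ - t) = E t := by rw [hGdef]; simp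
      rw [Real.norm_eq_abs, h5, abs_of_nonneg (hEnn t)] at hg
      linarith [hEnn t]
    · intro s hs
      rw [Real.norm_eq_abs, Real.norm_eq_abs, abs_neg, add_zero]
      have h5 : G s = E (t₀ - s) := rfl
      rw [h5, abs_of_nonneg (hEnn _)]
      exact hbound (t₀ - s) ⟨by linarith [hs.2], by linarith [hs.1, ht₀.2]⟩
  intro t ht
  have hEt : E t = 0 := by
    rcases le_total t t₀ with h | h
    · exact bwd t ⟨ht.1, h⟩
    · exact fwd t ⟨h, ht.2⟩
  have h1 := sq_nonneg (x t)
  have h2 := sq_nonneg (deriv x t)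
  have : (x t) ^ 2 = 0 := by rw [hEdef] at hEt; simp at hEt; linarith
  exact pow_eq_zero_iff (by norm_num) |>.mp this

lemma eventually_pos_right {x : ℝ → ℝ} {a c : ℝ} (h : HasDerivAt x c a)
    (hxa : x a = 0) (hc : 0 < c) : ∀ᶠ t in 𝓝[>] a, 0 < x t := by
  have h1 : Tendsto (slope x a) (𝓝[≠] a) (𝓝 c) := hasDerivAt_iff_tendsto_slope.mp h
  have h2 : ∀ᶠ t in 𝓝[≠] a, slope x a t ∈ Ioi 0 := h1 (Ioi_mem_nhds hc)
  have h3 : ∀ᶠ t in 𝓝[>] a, slope x a t ∈ Ioi 0 :=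
    h2.filter_mono (nhdsWithin_mono a fun t ht => (ne_of_gt ht))
  filter_upwards [h3, self_mem_nhdsWithin] with t hst hta
  have hta' : 0 < t - a := sub_pos.mpr hta
  have hs : 0 < (x t - x a) / (t - a) := by rwa [slope_def_field] at hst
  rw [hxa, sub_zero] at hs
  rcases div_pos_iff.mp hs with ⟨h1, _⟩ | ⟨_, h2⟩
  · exact h1
  · linarith

lemma deriv_nonpos_left {x : ℝ → ℝ} {a b c : ℝ} (h : HasDerivAt x c b) (hab : a < b)
    (hpos : ∀ t ∈ Ioo a b, 0 < x t) (hxb : x b = 0) : c ≤ 0 := by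
  have h1 : Tendsto (slope x b) (𝓝[<] b) (𝓝 c) :=
    (hasDerivAt_iff_tendsto_slope.mp h).mono_left (nhdsWithin_mono b fun t ht => (ne_of_lt ht))
  refine le_of_tendsto h1 ?_
  filter_upwards [Ioo_mem_nhdsLT_of_mem ⟨hab, le_refl b⟩] with t ht
  rw [slope_def_field, hxb, sub_zero]
  have h2 : x t ≤ 0 → False := fun hh => absurd (hpos t ht) (by linarith)
  have := hpos t ht
  have h3 : t - b < 0 := sub_neg.mpr ht.2
  exact le_of_lt (div_neg_of_pos_of_neg (hpos t ht) h3)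

lemma firstZero {x : ℝ → ℝ} (hd : Differentiable ℝ x) {a T : ℝ} (haT : a < T)
    (hxa : x a = 0) (hxT : x T = 0) (h' : 0 < deriv x a) :
    ∃ b, a < b ∧ b ≤ T ∧ x b = 0 ∧ ∀ t ∈ Ioo a b, 0 < x t := by
  have hev := eventually_pos_right (hd a).hasDerivAt hxa h'
  obtain ⟨u, hu, hIoc⟩ := mem_nhdsGT_iff_exists_Ioc_subset.mp hev
  have huT : u < T := by
    by_contra hc
    push_neg at hc
    have := hIoc ⟨haT, hc⟩
    simp only [mem_setOf_eq, hxT] at this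
    exact lt_irrefl 0 this
  set Z := Icc u T ∩ x ⁻¹' {0} with hZ
  have hZc : IsClosed Z := isClosed_Icc.inter (isClosed_singleton.preimage hd.continuous)
  have hZne : Z.Nonempty := ⟨T, ⟨le_of_lt huT, le_refl T⟩, hxT⟩
  have hZbb : BddBelow Z := (BddBelow.mono inter_subset_left bddBelow_Icc)
  set b := sInf Z with hb
  have hbZ : b ∈ Z := hZc.csInf_mem hZne hZbb
  have hub : u ≤ b := hbZ.1.1
  have hbT : b ≤ T := hbZ.1.2
  refine ⟨b, lt_of_lt_of_le hu hub, hbT, hbZ.2, ?_⟩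
  intro t ht
  rcases le_or_gt t u with htu | htu
  · exact hIoc ⟨ht.1, htu⟩
  · by_contra hc
    push_neg at hc
    have hxu : 0 < x u := hIoc ⟨hu, le_refl u⟩
    have hsub : Icc (0:ℝ) 0 ⊆ Icc (x t) (x u) := by
      intro s hs
      simp only [Icc_self, mem_singleton_iff] at hs
      exact ⟨by rw [hs]; exact hc, by rw [hs]; exact le_of_lt hxu⟩
    have hivt := intermediate_value_Icc' (le_of_lt htu) (hd.continuous.continuousOn)
    obtain ⟨s, hs, hxs⟩ := hivt (hsub (left_mem_Icc.mpr le_rfl))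
    have hsZ : s ∈ Z := ⟨⟨hs.1, le_trans hs.2 (le_trans (le_of_lt ht.2) hbT)⟩, hxs⟩
    have := csInf_le hZbb hsZ
    have : b ≤ t := le_trans this hs.2
    exact absurd ht.2 (not_lt.mpr this)

lemma wronskian_deriv (T : ℝ) (hT : 0 < T) (q : ℝ → ℝ)
    (x : ℝ → ℝ) (hx : ContDiff ℝ 2 x)
    (hode : ∀ t ∈ Icc (0 : ℝ) T, deriv (deriv x) t + q t * x t = 0)
    (a t : ℝ) (ht : t ∈ Icc (0 : ℝ) T) :
    HasDerivAt (fun s => x s * (2 * π / T * Real.cos (2 * π / T * (s - a)))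
        - deriv x s * Real.sin (2 * π / T * (s - a)))
      ((q t - (2 * π) ^ 2 / T ^ 2) * (x t * Real.sin (2 * π / T * (t - a)))) t := by
  set ω := 2 * π / T with hω
  have hlin : HasDerivAt (fun s : ℝ => ω * (s - a)) ω t := by
    simpa using ((hasDerivAt_id t).sub_const a).const_mul ω
  have hsin : HasDerivAt (fun s => Real.sin (ω * (s - a)))
      (Real.cos (ω * (t - a)) * ω) t := (Real.hasDerivAt_sin _).comp t hlin
  have hcos : HasDerivAt (fun s => Real.cos (ω * (s - a)))
      (-Real.sin (ω * (t - a)) * ω) t := (Real.hasDerivAt_cos _).comp t hlin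
  have hx1 : HasDerivAt x (deriv x t) t := ((hx.differentiable two_ne_zero) t).hasDerivAt
  have hx2 : HasDerivAt (deriv x) (deriv (deriv x) t) t := ((smooth2 hx) t).hasDerivAt
  have hW := (hx1.fun_mul (hcos.const_mul ω)).fun_sub (hx2.fun_mul hsin)
  have hode' : deriv (deriv x) t = -(q t * x t) := by linarith [hode t ht]
  rw [hode'] at hW
  refine hW.congr_deriv ?_
  have hω2 : ω ^ 2 = (2 * π) ^ 2 / T ^ 2 := by rw [hω]; ring
  rw [← hω2]
  ring

lemma sturm_le (T : ℝ) (hT : 0 < T) (q : ℝ → ℝ)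
    (hub : ∀ t ∈ Icc (0 : ℝ) T, q t ≤ (2 * π) ^ 2 / T ^ 2)
    (x : ℝ → ℝ) (hx : ContDiff ℝ 2 x)
    (hode : ∀ t ∈ Icc (0 : ℝ) T, deriv (deriv x) t + q t * x t = 0)
    (a b : ℝ) (ha : 0 ≤ a) (hb : b ≤ T) (hab : a < b)
    (hxa : x a = 0) (hxb : x b = 0) (hx'b : deriv x b < 0)
    (hpos : ∀ t ∈ Ioo a b, 0 < x t) : T / 2 ≤ b - a := by
  by_contra hlt
  push_neg at hlt
  set ω := 2 * π / T with hω
  have hωpos : 0 < ω := by rw [hω]; positivity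
  set W := fun s => x s * (ω * Real.cos (ω * (s - a))) - deriv x s * Real.sin (ω * (s - a))
    with hWdef
  have hsub : Icc a b ⊆ Icc 0 T := Icc_subset_Icc ha hb
  have hW : ∀ t ∈ Icc (0:ℝ) T,
      HasDerivAt W ((q t - (2*π)^2/T^2) * (x t * Real.sin (ω * (t - a)))) t :=
    fun t ht => wronskian_deriv T hT q x hx hode a t ht
  have hπT : ω * (T / 2) = π := by rw [hω]; field_simp
  have hsinpos : ∀ t ∈ Ioc a b, 0 < Real.sin (ω * (t - a)) := by
    intro t ht
    apply Real.sin_pos_of_pos_of_lt_pi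
    · exact mul_pos hωpos (sub_pos.mpr ht.1)
    · have h1 : ω * (t - a) < ω * (T / 2) :=
        mul_lt_mul_of_pos_left (by linarith [ht.2]) hωpos
      linarith
  have hanti : AntitoneOn W (Icc a b) := by
    apply antitoneOn_of_deriv_nonpos (convex_Icc a b)
    · intro t ht
      exact ((hW t (hsub ht)).differentiableAt.continuousAt).continuousWithinAt
    · rw [interior_Icc]; intro t ht
      exact ((hW t (hsub (Ioo_subset_Icc_self ht))).differentiableAt).differentiableWithinAt
    · rw [interior_Icc]; intro t ht
      rw [(hW t (hsub (Ioo_subset_Icc_self ht))).deriv]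
      apply mul_nonpos_iff.mpr
      refine Or.inr ⟨by linarith [hub t (hsub (Ioo_subset_Icc_self ht))], ?_⟩
      exact le_of_lt (mul_pos (hpos t ht) (hsinpos t ⟨ht.1, le_of_lt ht.2⟩))
  have hWa : W a = 0 := by simp [hWdef, hxa]
  have hWb : W b ≤ 0 := by
    have := hanti (left_mem_Icc.mpr (le_of_lt hab)) (right_mem_Icc.mpr (le_of_lt hab))
      (le_of_lt hab)
    rwa [hWa] at this
  have hsb : 0 < Real.sin (ω * (b - a)) := hsinpos b ⟨hab, le_refl b⟩
  have hWbval : W b = - (deriv x b * Real.sin (ω * (b - a))) := by simp [hWdef, hxb]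
  nlinarith [mul_pos (neg_pos.mpr hx'b) hsb]

lemma sturm_ne (T : ℝ) (hT : 0 < T) (q : ℝ → ℝ)
    (hub : ∀ t ∈ Icc (0 : ℝ) T, q t ≤ (2 * π) ^ 2 / T ^ 2)
    (x : ℝ → ℝ) (hx : ContDiff ℝ 2 x)
    (hode : ∀ t ∈ Icc (0 : ℝ) T, deriv (deriv x) t + q t * x t = 0)
    (a b : ℝ) (ha : 0 ≤ a) (hb : b ≤ T) (hab : a < b)
    (hxa : x a = 0) (hxb : x b = 0)
    (hpos : ∀ t ∈ Ioo a b, 0 < x t) (heq : b - a = T / 2)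
    (hm : 0 < volume {t ∈ Icc a b | q t < (2 * π) ^ 2 / T ^ 2}) : False := by
  set ω := 2 * π / T with hω
  have hωpos : 0 < ω := by rw [hω]; positivity
  set W := fun s => x s * (ω * Real.cos (ω * (s - a))) - deriv x s * Real.sin (ω * (s - a))
    with hWdef
  have hsub : Icc a b ⊆ Icc 0 T := Icc_subset_Icc ha hb
  have hW : ∀ t ∈ Icc (0:ℝ) T,
      HasDerivAt W ((q t - (2*π)^2/T^2) * (x t * Real.sin (ω * (t - a)))) t :=
    fun t ht => wronskian_deriv T hT q x hx hode a t ht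
  have hπb : ω * (b - a) = π := by rw [heq, hω]; field_simp
  have hsinpos : ∀ t ∈ Ioo a b, 0 < Real.sin (ω * (t - a)) := by
    intro t ht
    apply Real.sin_pos_of_pos_of_lt_pi
    · exact mul_pos hωpos (sub_pos.mpr ht.1)
    · have h1 : ω * (t - a) < ω * (b - a) :=
        mul_lt_mul_of_pos_left (by linarith [ht.2]) hωpos
      linarith [hπb]
  have hanti : AntitoneOn W (Icc a b) := by
    apply antitoneOn_of_deriv_nonpos (convex_Icc a b)
    · intro t ht
      exact ((hW t (hsub ht)).differentiableAt.continuousAt).continuousWithinAt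
    · rw [interior_Icc]; intro t ht
      exact ((hW t (hsub (Ioo_subset_Icc_self ht))).differentiableAt).differentiableWithinAt
    · rw [interior_Icc]; intro t ht
      rw [(hW t (hsub (Ioo_subset_Icc_self ht))).deriv]
      apply mul_nonpos_iff.mpr
      refine Or.inr ⟨by linarith [hub t (hsub (Ioo_subset_Icc_self ht))], ?_⟩
      exact le_of_lt (mul_pos (hpos t ht) (hsinpos t ht))
  have hWa : W a = 0 := by simp [hWdef, hxa]
  have hWb : W b = 0 := by
    have : W b = - (deriv x b * Real.sin (ω * (b - a))) := by simp [hWdef, hxb]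
    rw [hπb, Real.sin_pi] at this
    simpa using this
  have hzero : ∀ t ∈ Icc a b, W t = 0 := by
    intro t ht
    have h1 : W t ≤ 0 := by
      have := hanti (left_mem_Icc.mpr (le_of_lt hab)) ht ht.1
      rwa [hWa] at this
    have h2 : 0 ≤ W t := by
      have := hanti ht (right_mem_Icc.mpr (le_of_lt hab)) ht.2
      rwa [hWb] at this
    linarith
  have hfin : volume ({a, b} : Set ℝ) = 0 :=
    ((Set.countable_singleton b).insert a).measure_zero _
  have hpos' : 0 < volume ({t ∈ Icc a b | q t < (2 * π) ^ 2 / T ^ 2} \ {a, b}) := by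
    rwa [measure_diff_null hfin]
  obtain ⟨c, hc⟩ := nonempty_of_measure_ne_zero (ne_of_gt hpos')
  have hcIoo : c ∈ Ioo a b := by
    have h1 := hc.1.1
    have h2 := hc.2
    simp only [mem_insert_iff, mem_singleton_iff, not_or] at h2
    exact ⟨lt_of_le_of_ne h1.1 (Ne.symm h2.1), lt_of_le_of_ne h1.2 h2.2⟩
  have hev : W =ᶠ[𝓝 c] (fun _ => 0) := by
    filter_upwards [isOpen_Ioo.mem_nhds hcIoo] with s hs
    exact hzero s (Ioo_subset_Icc_self hs)
  have hd0 : deriv W c = 0 := by rw [hev.deriv_eq]; simp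
  have hdW := (hW c (hsub (Ioo_subset_Icc_self hcIoo))).deriv
  have hneg : (q c - (2 * π) ^ 2 / T ^ 2) * (x c * Real.sin (ω * (c - a))) < 0 :=
    mul_neg_of_neg_of_pos (by linarith [hc.1.2]) (mul_pos (hpos _ hcIoo) (hsinpos _ hcIoo))
  rw [hdW] at hd0
  linarith

lemma key (T : ℝ) (hT : 0 < T) (q : ℝ → ℝ) (hq : Continuous q)
    (hub : ∀ t ∈ Icc (0 : ℝ) T, q t ≤ (2 * π) ^ 2 / T ^ 2)
    (hstrict : 0 < volume {t ∈ Icc (0 : ℝ) T | q t < (2 * π) ^ 2 / T ^ 2})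
    (x : ℝ → ℝ) (hx : ContDiff ℝ 2 x)
    (hode : ∀ t ∈ Icc (0 : ℝ) T, deriv (deriv x) t + q t * x t = 0)
    (hx0 : x 0 = 0) (hxT : x T = 0)
    (h0 : 0 < deriv x 0) (hTd : 0 < deriv x T) : False := by
  have hd : Differentiable ℝ x := hx.differentiable two_ne_zero
  have hne : ∀ t₀ ∈ Icc (0:ℝ) T, ¬ (x t₀ = 0 ∧ deriv x t₀ = 0) := by
    rintro t₀ ht₀ ⟨hz, hz'⟩
    have hall := uniq T hT q hq x hx hode t₀ ht₀ hz hz'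
    have hev := eventually_pos_right (hd 0).hasDerivAt hx0 h0
    have hev2 : ∀ᶠ t in 𝓝[>] (0:ℝ), x t = 0 := by
      filter_upwards [Ioc_mem_nhdsGT hT] with t ht
      exact hall t ⟨le_of_lt ht.1, ht.2⟩
    obtain ⟨t, h1, h2⟩ := (hev.and hev2).exists
    linarith
  obtain ⟨t₁, h0t₁, ht₁T, hxt₁, hpos₁⟩ := firstZero hd hT hx0 hxT h0
  have hx'₁le : deriv x t₁ ≤ 0 := deriv_nonpos_left (hd t₁).hasDerivAt h0t₁ hpos₁ hxt₁
  have ht₁mem : t₁ ∈ Icc (0:ℝ) T := ⟨le_of_lt h0t₁, ht₁T⟩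
  have hx'₁ : deriv x t₁ < 0 :=
    lt_of_le_of_ne hx'₁le (fun h => hne t₁ ht₁mem ⟨hxt₁, h⟩)
  rcases eq_or_lt_of_le ht₁T with hcase | hcase
  · rw [hcase] at hx'₁; linarith
  · have hS1 : T / 2 ≤ t₁ - 0 :=
      sturm_le T hT q hub x hx hode 0 t₁ le_rfl ht₁T h0t₁ hx0 hxt₁ hx'₁ hpos₁
    have hy : ContDiff ℝ 2 (fun t => -x t) := hx.neg
    have hdy : deriv (fun t => -x t) = fun t => -deriv x t := deriv.neg'
    have hddy : deriv (deriv (fun t => -x t)) = fun t => -(deriv (deriv x) t) := by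
      rw [hdy]; exact deriv.neg'
    have hodey : ∀ t ∈ Icc (0:ℝ) T, deriv (deriv (fun t => -x t)) t + q t * (-x t) = 0 := by
      intro t ht
      rw [hddy]
      have := hode t ht
      simp only
      linarith
    have hdy' : Differentiable ℝ (fun t => -x t) := hd.neg
    have hy't₁ : 0 < deriv (fun t => -x t) t₁ := by
      rw [hdy]; exact neg_pos.mpr hx'₁
    obtain ⟨t₂, ht₁t₂, ht₂T, hyt₂, hpos₂⟩ :=
      firstZero hdy' hcase (by simp [hxt₁]) (by simp [hxT]) hy't₁
    have hxt₂ : x t₂ = 0 := by simpa using hyt₂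
    have hy'₂le : deriv (fun t => -x t) t₂ ≤ 0 :=
      deriv_nonpos_left (hdy' t₂).hasDerivAt ht₁t₂ hpos₂ hyt₂
    have hy'₂ : deriv (fun t => -x t) t₂ < 0 := by
      refine lt_of_le_of_ne hy'₂le (fun h => ?_)
      rw [hdy] at h
      have hzz : deriv x t₂ = 0 := by simpa using h
      exact hne t₂ ⟨le_of_lt (lt_trans h0t₁ ht₁t₂), ht₂T⟩ ⟨hxt₂, hzz⟩
    have hS2 : T / 2 ≤ t₂ - t₁ :=
      sturm_le T hT q hub (fun t => -x t) hy hodey t₁ t₂ (le_of_lt h0t₁) ht₂T ht₁t₂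
        (by simp [hxt₁]) hyt₂ hy'₂ hpos₂
    have ht₂eq : t₂ = T := le_antisymm ht₂T (by linarith)
    rw [ht₂eq] at hS2
    have ht₁eq : t₁ = T / 2 := by linarith
    have hsplit : {t ∈ Icc (0:ℝ) T | q t < (2 * π) ^ 2 / T ^ 2} ⊆
        {t ∈ Icc (0:ℝ) t₁ | q t < (2 * π) ^ 2 / T ^ 2} ∪
        {t ∈ Icc t₁ T | q t < (2 * π) ^ 2 / T ^ 2} := by
      rintro t ⟨⟨h1, h2⟩, h3⟩
      rcases le_total t t₁ with h | h
      · exact Or.inl ⟨⟨h1, h⟩, h3⟩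
      · exact Or.inr ⟨⟨h, h2⟩, h3⟩
    have hone : 0 < volume {t ∈ Icc (0:ℝ) t₁ | q t < (2 * π) ^ 2 / T ^ 2} ∨
        0 < volume {t ∈ Icc t₁ T | q t < (2 * π) ^ 2 / T ^ 2} := by
      by_contra hc
      push_neg at hc
      obtain ⟨hc1, hc2⟩ := hc
      have h1 : volume {t ∈ Icc (0:ℝ) t₁ | q t < (2 * π) ^ 2 / T ^ 2} = 0 :=
        le_antisymm hc1 zero_le
      have h2 : volume {t ∈ Icc t₁ T | q t < (2 * π) ^ 2 / T ^ 2} = 0 :=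
        le_antisymm hc2 zero_le
      have hun := measure_union_le (μ := volume)
        {t ∈ Icc (0:ℝ) t₁ | q t < (2 * π) ^ 2 / T ^ 2}
        {t ∈ Icc t₁ T | q t < (2 * π) ^ 2 / T ^ 2}
      rw [h1, h2, add_zero] at hun
      have h3 := le_trans (measure_mono hsplit (μ := volume)) hun
      rw [le_zero_iff] at h3
      exact ne_of_gt hstrict h3
    rcases hone with hA | hB
    · exact sturm_ne T hT q hub x hx hode 0 t₁ le_rfl ht₁T h0t₁ hx0 hxt₁ hpos₁
        (by rw [ht₁eq]; ring) hA
    · exact sturm_ne T hT q hub (fun t => -x t) hy hodey t₁ T (le_of_lt h0t₁) le_rfl hcase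
        (by simp [hxt₁]) (by simp [hxT]) (ht₂eq ▸ hpos₂)
        (by rw [ht₁eq]; ring) hB

end Stmt1Aux

open Stmt1Aux in
/-- If `q ≤ (2π)²/T²` on `[0,T]` with strict inequality on a set of positive measure, then the
only solution of `x'' + q x = 0`, `x(0) = x(T) = 0`, `sgn x'(0) = sgn x'(T)` is trivial. -/
theorem stmt1 (T : ℝ) (hT : 0 < T) (q : ℝ → ℝ) (hq : Continuous q)
    (hub : ∀ t ∈ Icc (0 : ℝ) T, q t ≤ (2 * π) ^ 2 / T ^ 2)
    (hstrict : 0 < volume {t ∈ Icc (0 : ℝ) T | q t < (2 * π) ^ 2 / T ^ 2})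
    (x : ℝ → ℝ) (hx : ContDiff ℝ 2 x)
    (hode : ∀ t ∈ Icc (0 : ℝ) T, deriv (deriv x) t + q t * x t = 0)
    (hx0 : x 0 = 0) (hxT : x T = 0)
    (hsgn : Real.sign (deriv x 0) = Real.sign (deriv x T)) :
    ∀ t ∈ Icc (0 : ℝ) T, x t = 0 := by
  rcases lt_trichotomy (deriv x 0) 0 with hneg | hzero | hpos
  · -- apply key to -x
    exfalso
    have hsT : Real.sign (deriv x T) = -1 := by rw [← hsgn, Real.sign_of_neg hneg]
    have hTneg : deriv x T < 0 := by
      rcases lt_trichotomy (deriv x T) 0 with h | h | h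
      · exact h
      · rw [h, Real.sign_zero] at hsT; norm_num at hsT
      · rw [Real.sign_of_pos h] at hsT; norm_num at hsT
    have hdy : deriv (fun t => -x t) = fun t => -deriv x t := deriv.neg'
    have hddy : deriv (deriv (fun t => -x t)) = fun t => -deriv (deriv x) t := by
      rw [hdy]; exact deriv.neg'
    refine key T hT q hq hub hstrict (fun t => -x t) hx.neg ?_ (by simp [hx0]) (by simp [hxT])
      ?_ ?_
    · intro t ht
      rw [hddy]
      have := hode t ht
      simp only; linarith
    · rw [hdy]; simpa using hneg
    · rw [hdy]; simpa using hTneg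
  · -- trivial by uniqueness
    exact uniq T hT q hq x hx hode 0 (by constructor <;> [rfl; exact le_of_lt hT]) hx0 hzero
  · exfalso
    have hsT : Real.sign (deriv x T) = 1 := by rw [← hsgn, Real.sign_of_pos hpos]
    have hTpos : 0 < deriv x T := by
      rcases lt_trichotomy (deriv x T) 0 with h | h | h
      · rw [Real.sign_of_neg h] at hsT; norm_num at hsT
      · rw [h, Real.sign_zero] at hsT; norm_num at hsT
      · exact h
    exact key T hT q hq hub hstrict x hx hode hx0 hxT hpos hTpos
end

section
/- Let c ∈ ℝ, T > 0, and let α : ℝ → ℝ be a T-periodic essentially bounded function such that α(t) ≤ (2π)²/T² + c²/4 for a.e. t with strict inequality on a set of positive measure, and such that the average (1/T)∫₀^T α(t) dt > 0. Then the equation x'' + c x' + α(t) x = 0 admits no nontrivial T-periodic solution. -/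
open Real MeasureTheory Set intervalIntegral

/-- Local vanishing: if `x` and `x'` vanish at `τ`, they vanish on a fixed-size interval. -/
lemma loc_vanish {x : ℝ → ℝ} (hx : ContDiff ℝ 2 x) {K : ℝ} (hK0 : 0 ≤ K)
    (hK : ∀ᵐ t ∂(volume : Measure ℝ), |deriv (deriv x) t| ≤ K * (|x t| + |deriv x t|))
    {τ : ℝ} (h0 : x τ = 0) (h1 : deriv x τ = 0) :
    ∀ t ∈ Icc (τ - (2*(K+1))⁻¹) (τ + (2*(K+1))⁻¹), x t = 0 ∧ deriv x t = 0 := by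
  have hK1 : (0:ℝ) < K + 1 := by linarith
  set h : ℝ := (2*(K+1))⁻¹ with hh
  have hhpos : 0 < h := by positivity
  have hx1 : ContDiff ℝ 1 x := hx.of_le (by norm_num)
  have hx' : ContDiff ℝ 1 (deriv x) :=
    (contDiff_succ_iff_deriv.mp (show ContDiff ℝ (1+1) x by norm_num [hx])).2.2
  have hcx : Continuous x := hx1.continuous
  have hcx' : Continuous (deriv x) := hx'.continuous
  have hcx'' : Continuous (deriv (deriv x)) := hx'.continuous_deriv (le_refl 1)
  have hcg : Continuous (fun t => |x t| + |deriv x t|) := (hcx.abs).add (hcx'.abs)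
  have hIc : IsCompact (Icc (τ - h) (τ + h)) := isCompact_Icc
  have hIne : (Icc (τ - h) (τ + h)).Nonempty := ⟨τ, by constructor <;> linarith⟩
  obtain ⟨p, hpI, hpmax⟩ := hIc.exists_isMaxOn hIne hcg.continuousOn
  have hm0 : (0:ℝ) ≤ |x p| + |deriv x p| := by positivity
  -- the key estimate
  have key : ∀ t ∈ Icc (τ - h) (τ + h),
      |x t| + |deriv x t| ≤ (K + 1) * (|x p| + |deriv x p|) * h := by
    intro t ht
    have htd : |t - τ| ≤ h := by
      rw [abs_le]; constructor
      · linarith [ht.1]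
      · linarith [ht.2]
    obtain ⟨hd1, hd2⟩ := abs_le.mp htd
    have hsub : Set.uIcc τ t ⊆ Icc (τ - h) (τ + h) := by
      intro s hs
      rcases Set.mem_uIcc.mp hs with ⟨ha, hb⟩ | ⟨ha, hb⟩ <;> exact ⟨by linarith, by linarith⟩
    have ftc1 : ∫ s in τ..t, deriv x s = x t - x τ := by
      apply intervalIntegral.integral_deriv_eq_sub
      · intro s _; exact (hx1.differentiable one_ne_zero).differentiableAt
      · exact hcx'.intervalIntegrable τ t
    have ftc2 : ∫ s in τ..t, deriv (deriv x) s = deriv x t - deriv x τ := by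
      apply intervalIntegral.integral_deriv_eq_sub
      · intro s _; exact (hx'.differentiable one_ne_zero).differentiableAt
      · exact hcx''.intervalIntegrable τ t
    have hb1 : |x t| ≤ (|x p| + |deriv x p|) * h := by
      have hest : ‖∫ s in τ..t, deriv x s‖ ≤ (|x p| + |deriv x p|) * |t - τ| := by
        apply intervalIntegral.norm_integral_le_of_norm_le_const
        intro s hs
        have hsI : s ∈ Icc (τ - h) (τ + h) := hsub (Set.uIoc_subset_uIcc hs)
        have := hpmax hsI
        calc ‖deriv x s‖ = |deriv x s| := rfl
          _ ≤ |x s| + |deriv x s| := by linarith [abs_nonneg (x s)]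
          _ ≤ |x p| + |deriv x p| := this
      rw [ftc1, h0, sub_zero] at hest
      calc |x t| ≤ (|x p| + |deriv x p|) * |t - τ| := hest
        _ ≤ (|x p| + |deriv x p|) * h := mul_le_mul_of_nonneg_left htd hm0
    have hb2 : |deriv x t| ≤ K * (|x p| + |deriv x p|) * h := by
      have hest : ‖∫ s in τ..t, deriv (deriv x) s‖ ≤ K * (|x p| + |deriv x p|) * |t - τ| := by
        apply intervalIntegral.norm_integral_le_of_norm_le_const_ae
        filter_upwards [hK] with s hs hsmem
        have hsI : s ∈ Icc (τ - h) (τ + h) := hsub (Set.uIoc_subset_uIcc hsmem)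
        calc ‖deriv (deriv x) s‖ = |deriv (deriv x) s| := rfl
          _ ≤ K * (|x s| + |deriv x s|) := hs
          _ ≤ K * (|x p| + |deriv x p|) := mul_le_mul_of_nonneg_left (hpmax hsI) hK0
      rw [ftc2, h1, sub_zero] at hest
      calc |deriv x t| ≤ K * (|x p| + |deriv x p|) * |t - τ| := hest
        _ ≤ K * (|x p| + |deriv x p|) * h :=
          mul_le_mul_of_nonneg_left htd (by positivity)
    calc |x t| + |deriv x t| ≤ (|x p| + |deriv x p|) * h + K * (|x p| + |deriv x p|) * h :=
          add_le_add hb1 hb2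
      _ = (K + 1) * (|x p| + |deriv x p|) * h := by ring
  have hm_le := key p hpI
  have hmh : (K + 1) * (|x p| + |deriv x p|) * h = (|x p| + |deriv x p|) / 2 := by
    rw [hh]; field_simp
  rw [hmh] at hm_le
  have hmz : |x p| + |deriv x p| = 0 := by linarith
  intro t ht
  have hle : |x t| + |deriv x t| ≤ |x p| + |deriv x p| := hpmax ht
  rw [hmz] at hle
  have ha := abs_nonneg (x t)
  have hb := abs_nonneg (deriv x t)
  exact ⟨abs_eq_zero.mp (le_antisymm (by linarith) ha),
    abs_eq_zero.mp (le_antisymm (by linarith) hb)⟩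

/-- Global uniqueness: if `x` and `x'` vanish at a point, `x ≡ 0`. -/
lemma glob_vanish {x : ℝ → ℝ} (hx : ContDiff ℝ 2 x) {K : ℝ} (hK0 : 0 ≤ K)
    (hK : ∀ᵐ t ∂(volume : Measure ℝ), |deriv (deriv x) t| ≤ K * (|x t| + |deriv x t|))
    {τ : ℝ} (h0 : x τ = 0) (h1 : deriv x τ = 0) : ∀ t, x t = 0 := by
  have hK1 : (0:ℝ) < K + 1 := by linarith
  set h : ℝ := (2*(K+1))⁻¹ with hh
  have hhpos : 0 < h := by positivity
  have main : ∀ n : ℕ, ∀ t ∈ Icc (τ - n * h) (τ + n * h), x t = 0 ∧ deriv x t = 0 := by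
    intro n
    induction n with
    | zero => intro t ht; simp at ht
              rw [ht]; exact ⟨h0, h1⟩
    | succ n ih =>
      intro t ht
      push_cast at ht
      rcases le_or_gt t (τ - n * h) with hcase | hcase
      · have hend := ih (τ - n * h) ⟨by linarith, by linarith [mul_nonneg (Nat.cast_nonneg n) hhpos.le]⟩
        exact loc_vanish hx hK0 hK hend.1 hend.2 t ⟨by push_cast; linarith [ht.1], by linarith⟩
      · rcases le_or_gt t (τ + n * h) with hcase2 | hcase2
        · exact ih t ⟨hcase.le, hcase2⟩
        · have hend := ih (τ + n * h) ⟨by linarith [mul_nonneg (Nat.cast_nonneg n) hhpos.le], by linarith⟩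
          exact loc_vanish hx hK0 hK hend.1 hend.2 t ⟨by linarith, by push_cast; linarith [ht.2]⟩
  intro t
  obtain ⟨n, hn⟩ := exists_nat_ge (|t - τ| / h)
  have hd : |t - τ| ≤ n * h := by
    rw [div_le_iff₀ hhpos] at hn; linarith
  obtain ⟨hd1, hd2⟩ := abs_le.mp hd
  exact (main n t ⟨by linarith, by linarith⟩).1
open Real MeasureTheory Set intervalIntegral

section sturm
variable {y a : ℝ → ℝ} {M b δ s e : ℝ}

/-- Sturm comparison core: the Wronskian of `y` with `sin (b(t-s)+δ)` is antitone. -/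
lemma sturm_W (hy : ContDiff ℝ 2 y) (hM : 0 < M) (hb : b = Real.sqrt M)
    (hode : ∀ᵐ t ∂(volume : Measure ℝ), deriv (deriv y) t = -(a t * y t))
    (hub : ∀ᵐ t ∂(volume : Measure ℝ), a t ≤ M)
    (hse : s < e) (hypos : ∀ t ∈ Ioo s e, 0 < y t) (hys : y s = 0) (hye : y e = 0)
    (hδ0 : 0 ≤ δ) (hδπ : b * (e - s) + δ ≤ π) :
    AntitoneOn (fun t => y t * (b * Real.cos (b*(t-s)+δ))
        - deriv y t * Real.sin (b*(t-s)+δ)) (Icc s e) ∧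
    ∀ t, HasDerivAt (fun t => y t * (b * Real.cos (b*(t-s)+δ))
        - deriv y t * Real.sin (b*(t-s)+δ))
      ((-(M * y t) - deriv (deriv y) t) * Real.sin (b*(t-s)+δ)) t := by
  have hbpos : 0 < b := hb ▸ Real.sqrt_pos.mpr hM
  have hb2 : b ^ 2 = M := by rw [hb, sq_sqrt hM.le]
  have hx1 : ContDiff ℝ 1 y := hy.of_le (by norm_num)
  have hy' : ContDiff ℝ 1 (deriv y) :=
    (contDiff_succ_iff_deriv.mp (show ContDiff ℝ (1+1) y by norm_num [hy])).2.2
  have hcy : Continuous y := hx1.continuous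
  have hcy' : Continuous (deriv y) := hy'.continuous
  have hcy'' : Continuous (deriv (deriv y)) := hy'.continuous_deriv (le_refl 1)
  have hdy : ∀ t, HasDerivAt y (deriv y t) t :=
    fun t => ((hx1.differentiable one_ne_zero) t).hasDerivAt
  have hdy' : ∀ t, HasDerivAt (deriv y) (deriv (deriv y) t) t :=
    fun t => ((hy'.differentiable one_ne_zero) t).hasDerivAt
  have hθ : ∀ t : ℝ, HasDerivAt (fun t => b*(t-s)+δ) b t := by
    intro t
    simpa using (((hasDerivAt_id t).sub_const s).const_mul b).add_const δ
  have hsin : ∀ t : ℝ, HasDerivAt (fun t => Real.sin (b*(t-s)+δ))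
      (Real.cos (b*(t-s)+δ) * b) t :=
    fun t => (Real.hasDerivAt_sin _).comp t (hθ t)
  have hcos : ∀ t : ℝ, HasDerivAt (fun t => b * Real.cos (b*(t-s)+δ))
      (b * (-Real.sin (b*(t-s)+δ) * b)) t :=
    fun t => ((Real.hasDerivAt_cos _).comp t (hθ t)).const_mul b
  have hW : ∀ t, HasDerivAt (fun t => y t * (b * Real.cos (b*(t-s)+δ))
      - deriv y t * Real.sin (b*(t-s)+δ))
      ((-(M * y t) - deriv (deriv y) t) * Real.sin (b*(t-s)+δ)) t := by
    intro t
    have h1 := ((hdy t).mul (hcos t)).sub ((hdy' t).mul (hsin t))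
    exact h1.congr_deriv (Eq.symm (by linear_combination (y t * Real.sin (b*(t-s)+δ)) * hb2))
  refine ⟨?_, hW⟩
  -- deriv is nonpositive on the interior
  have hderiv_eq : ∀ t, deriv (fun t => y t * (b * Real.cos (b*(t-s)+δ))
      - deriv y t * Real.sin (b*(t-s)+δ)) t
      = (-(M * y t) - deriv (deriv y) t) * Real.sin (b*(t-s)+δ) := fun t => (hW t).deriv
  have hFcont : Continuous (fun t => (-(M * y t) - deriv (deriv y) t) * Real.sin (b*(t-s)+δ)) := by
    fun_prop
  have hnonpos : ∀ t ∈ Ioo s e,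
      (-(M * y t) - deriv (deriv y) t) * Real.sin (b*(t-s)+δ) ≤ 0 := by
    by_contra hcon
    push_neg at hcon
    obtain ⟨t₀, ht₀, ht₀pos⟩ := hcon
    set V : Set ℝ := Ioo s e ∩
      (fun t => (-(M * y t) - deriv (deriv y) t) * Real.sin (b*(t-s)+δ)) ⁻¹' Ioi 0 with hV
    have hVopen : IsOpen V := isOpen_Ioo.inter (isOpen_Ioi.preimage hFcont)
    have hVne : V.Nonempty := ⟨t₀, ht₀, ht₀pos⟩
    have hVpos : 0 < volume V := hVopen.measure_pos volume hVne
    have : ∀ᵐ t ∂(volume : Measure ℝ), t ∉ V := by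
      filter_upwards [hode, hub] with t h1 h2
      intro htV
      obtain ⟨htIoo, htF⟩ := htV
      have hy0 : 0 < y t := hypos t htIoo
      have hw0 : 0 ≤ Real.sin (b*(t-s)+δ) := by
        apply Real.sin_nonneg_of_nonneg_of_le_pi
        · have : 0 ≤ b * (t - s) := by
            apply mul_nonneg hbpos.le; linarith [htIoo.1]
          linarith
        · have : b * (t - s) ≤ b * (e - s) := by
            apply mul_le_mul_of_nonneg_left _ hbpos.le; linarith [htIoo.2]
          linarith
      have : (-(M * y t) - deriv (deriv y) t) * Real.sin (b*(t-s)+δ)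
          = (a t - M) * y t * Real.sin (b*(t-s)+δ) := by rw [h1]; ring
      simp only [Set.mem_preimage, Set.mem_Ioi] at htF
      rw [this] at htF
      have : (a t - M) * y t * Real.sin (b*(t-s)+δ) ≤ 0 := by
        apply mul_nonpos_of_nonpos_of_nonneg _ hw0
        apply mul_nonpos_of_nonpos_of_nonneg _ hy0.le
        linarith
      linarith
    have hnull : volume V = 0 :=
      measure_mono_null (fun t ht => not_not.mpr ht) (ae_iff.mp this)
    exact absurd hnull hVpos.ne'
  apply antitoneOn_of_deriv_nonpos (convex_Icc s e)
  · exact (Continuous.sub (hcy.mul (by fun_prop)) (hcy'.mul (by fun_prop))).continuousOn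
  · intro t _
    exact ((hW t).differentiableAt).differentiableWithinAt
  · intro t ht
    rw [interior_Icc] at ht
    rw [hderiv_eq t]
    -- continuity upgrade: nonpos on Ioo implies nonpos at t (t ∈ Ioo already)
    exact hnonpos t ht
end sturm

section boundary
variable {y : ℝ → ℝ} {s e : ℝ}

lemma deriv_nonneg_right (hy : Differentiable ℝ y) (hse : s < e)
    (hys : y s = 0) (hypos : ∀ t ∈ Ioo s e, 0 < y t) : 0 ≤ deriv y s := by
  have hd : HasDerivWithinAt y (deriv y s) (Ioi s) s :=
    (hy s).hasDerivAt.hasDerivWithinAt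
  rw [hasDerivWithinAt_iff_tendsto_slope] at hd
  have hIoi : (Ioi s) \ {s} = Ioi s := Set.diff_singleton_eq_self (by simp)
  rw [hIoi] at hd
  refine ge_of_tendsto hd ?_
  filter_upwards [Ioo_mem_nhdsGT_of_mem (Set.mem_Ico.mpr ⟨le_refl s, hse⟩)] with t ht
  rw [slope_def_field, hys, sub_zero]
  exact div_nonneg (hypos t ht).le (by linarith [ht.1])

lemma deriv_nonpos_left (hy : Differentiable ℝ y) (hse : s < e)
    (hye : y e = 0) (hypos : ∀ t ∈ Ioo s e, 0 < y t) : deriv y e ≤ 0 := by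
  have hd : HasDerivWithinAt y (deriv y e) (Iio e) e :=
    (hy e).hasDerivAt.hasDerivWithinAt
  rw [hasDerivWithinAt_iff_tendsto_slope] at hd
  have hIio : (Iio e) \ {e} = Iio e := Set.diff_singleton_eq_self (by simp)
  rw [hIio] at hd
  refine le_of_tendsto hd ?_
  filter_upwards [Ioo_mem_nhdsLT_of_mem (Set.mem_Ioc.mpr ⟨hse, le_refl e⟩)] with t ht
  rw [slope_def_field, hye]
  apply div_nonpos_of_nonneg_of_nonpos
  · simp [sub_nonneg]; linarith [(hypos t ht).le]
  · linarith [ht.2]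

end boundary

section sturmAB
variable {y a : ℝ → ℝ} {M s e : ℝ}

/-- Sturm comparison: consecutive zeros are at least `π/√M` apart. -/
lemma sturm_gap (hy : ContDiff ℝ 2 y) (hM : 0 < M)
    (hode : ∀ᵐ t ∂(volume : Measure ℝ), deriv (deriv y) t = -(a t * y t))
    (hub : ∀ᵐ t ∂(volume : Measure ℝ), a t ≤ M)
    (hse : s < e) (hypos : ∀ t ∈ Ioo s e, 0 < y t) (hys : y s = 0) (hye : y e = 0)
    (hye' : deriv y e ≠ 0) : π / Real.sqrt M ≤ e - s := by
  set b : ℝ := Real.sqrt M with hb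
  have hbpos : 0 < b := Real.sqrt_pos.mpr hM
  by_contra hcon
  push_neg at hcon
  have hlt : b * (e - s) < π := by
    rw [lt_div_iff₀ hbpos] at hcon
    linarith
  have hespos : 0 < e - s := by linarith
  set δ : ℝ := (π - b * (e - s)) / 2 with hδ
  have hδ0 : 0 < δ := by simp [hδ]; linarith
  have hδπ : b * (e - s) + δ ≤ π := by
    rw [hδ]; linarith [mul_pos hbpos hespos]
  obtain ⟨hanti, hW⟩ := sturm_W hy hM hb (a := a) hode hub hse hypos hys hye hδ0.le hδπ
  have hdiff : Differentiable ℝ y := (hy.of_le (by norm_num : (1:WithTop ℕ∞) ≤ 2)).differentiable one_ne_zero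
  have hWs : y s * (b * Real.cos (b*(s-s)+δ)) - deriv y s * Real.sin (b*(s-s)+δ)
      = -(deriv y s * Real.sin δ) := by
    rw [hys]; ring_nf
  have hsinδ : 0 ≤ Real.sin δ := by
    apply Real.sin_nonneg_of_nonneg_of_le_pi hδ0.le
    rw [hδ]
    have := mul_pos hbpos hespos
    linarith [Real.pi_pos]
  have hys' : 0 ≤ deriv y s := deriv_nonneg_right hdiff hse hys hypos
  have hWsle : y s * (b * Real.cos (b*(s-s)+δ)) - deriv y s * Real.sin (b*(s-s)+δ) ≤ 0 := by
    rw [hWs]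
    simp only [neg_nonpos]
    positivity
  have hsinθe : 0 < Real.sin (b*(e-s)+δ) := by
    apply Real.sin_pos_of_pos_of_lt_pi
    · have := mul_pos hbpos hespos; linarith
    · rw [hδ]; linarith
  have hye'' : deriv y e < 0 :=
    lt_of_le_of_ne (deriv_nonpos_left hdiff hse hye hypos) hye'
  have hWe : 0 < y e * (b * Real.cos (b*(e-s)+δ)) - deriv y e * Real.sin (b*(e-s)+δ) := by
    rw [hye]
    have : 0 < -(deriv y e) * Real.sin (b*(e-s)+δ) := mul_pos (by linarith) hsinθe
    nlinarith
  have := hanti (Set.mem_Icc.mpr ⟨le_refl s, hse.le⟩) (Set.mem_Icc.mpr ⟨hse.le, le_refl e⟩) hse.le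
  simp only at this
  linarith

/-- Sturm equality: if consecutive zeros are exactly `π/√M` apart then `a = M` a.e. between. -/
lemma sturm_eq (hy : ContDiff ℝ 2 y) (hM : 0 < M)
    (hode : ∀ᵐ t ∂(volume : Measure ℝ), deriv (deriv y) t = -(a t * y t))
    (hub : ∀ᵐ t ∂(volume : Measure ℝ), a t ≤ M)
    (hse : s < e) (hypos : ∀ t ∈ Ioo s e, 0 < y t) (hys : y s = 0) (hye : y e = 0)
    (heq : e - s = π / Real.sqrt M) :
    ∀ᵐ t ∂(volume : Measure ℝ), t ∈ Ioo s e → a t = M := by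
  set b : ℝ := Real.sqrt M with hb
  have hbpos : 0 < b := Real.sqrt_pos.mpr hM
  have hbe : b * (e - s) = π := by
    rw [heq]; field_simp
  obtain ⟨hanti, hW⟩ := sturm_W hy hM hb (a := a) hode hub hse hypos hys hye
    (le_refl 0) (by rw [hbe, add_zero])
  set W : ℝ → ℝ := fun t => y t * (b * Real.cos (b*(t-s)+0))
      - deriv y t * Real.sin (b*(t-s)+0) with hWdef
  have hWs : W s = 0 := by simp [hWdef, hys]
  have hWe : W e = 0 := by simp [hWdef, hye, hbe]
  have hWzero : ∀ t ∈ Icc s e, W t = 0 := by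
    intro t ht
    have h1 : W t ≤ W s := hanti (Set.mem_Icc.mpr ⟨le_refl s, hse.le⟩) ht ht.1
    have h2 : W e ≤ W t := hanti ht (Set.mem_Icc.mpr ⟨hse.le, le_refl e⟩) ht.2
    rw [hWs] at h1; rw [hWe] at h2; linarith
  have hderiv0 : ∀ t ∈ Ioo s e,
      (-(M * y t) - deriv (deriv y) t) * Real.sin (b*(t-s)+0) = 0 := by
    intro t ht
    have heq : W =ᶠ[nhds t] (fun _ => (0:ℝ)) := by
      filter_upwards [isOpen_Ioo.mem_nhds ht] with u hu
      exact hWzero u (Ioo_subset_Icc_self hu)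
    have : deriv W t = 0 := by
      rw [Filter.EventuallyEq.deriv_eq heq]
      exact deriv_const t 0
    have h3 := (hW t).deriv
    rw [this] at h3
    exact h3.symm
  filter_upwards [hode] with t h1 ht
  have h2 := hderiv0 t ht
  have hsinθ : 0 < Real.sin (b*(t-s)+0) := by
    apply Real.sin_pos_of_pos_of_lt_pi
    · rw [add_zero]; exact mul_pos hbpos (by linarith [ht.1])
    · rw [add_zero, ← hbe]
      exact mul_lt_mul_of_pos_left (by linarith [ht.2]) hbpos
  have hyt : 0 < y t := hypos t ht
  rw [h1] at h2
  have : (a t - M) * (y t * Real.sin (b*(t-s)+0)) = 0 := by linear_combination h2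
  rcases mul_eq_zero.mp this with h | h
  · linarith
  · exact absurd h (mul_pos hyt hsinθ).ne'

end sturmAB
open Real MeasureTheory Set intervalIntegral

lemma periodic_deriv' {f : ℝ → ℝ} {T : ℝ} (hp : Function.Periodic f T) :
    Function.Periodic (deriv f) T := by
  intro t
  have h1 : (fun s => f (s + T)) = f := funext fun s => hp s
  calc deriv f (t + T) = deriv (fun s => f (s + T)) t := (deriv_comp_add_const f T t).symm
    _ = deriv f t := by rw [h1]

/-- Case 1: if the solution never vanishes, the average of `α` is nonpositive. -/
lemma avg_nonpos_of_no_zero (c T : ℝ) (hT : 0 < T) (α : ℝ → ℝ)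
    (x : ℝ → ℝ) (hx : ContDiff ℝ 2 x) (hxper : Function.Periodic x T)
    (hode : ∀ᵐ t ∂(volume : Measure ℝ),
      deriv (deriv x) t + c * deriv x t + α t * x t = 0)
    (hnz : ∀ t, x t ≠ 0) : (∫ t in (0:ℝ)..T, α t) ≤ 0 := by
  have hx1 : ContDiff ℝ 1 x := hx.of_le (by norm_num)
  have hx' : ContDiff ℝ 1 (deriv x) :=
    (contDiff_succ_iff_deriv.mp (show ContDiff ℝ (1+1) x by norm_num [hx])).2.2
  have hcx : Continuous x := hx1.continuous
  have hcx' : Continuous (deriv x) := hx'.continuous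
  have hcx'' : Continuous (deriv (deriv x)) := hx'.continuous_deriv (le_refl 1)
  have hdy : ∀ t, HasDerivAt x (deriv x t) t :=
    fun t => ((hx1.differentiable one_ne_zero) t).hasDerivAt
  have hdy' : ∀ t, HasDerivAt (deriv x) (deriv (deriv x) t) t :=
    fun t => ((hx'.differentiable one_ne_zero) t).hasDerivAt
  set g : ℝ → ℝ := fun t => deriv x t / x t with hg
  have hgd : ∀ t, HasDerivAt g
      ((deriv (deriv x) t * x t - deriv x t * deriv x t) / (x t)^2) t :=
    fun t => (hdy' t).div (hdy t) (hnz t)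
  have hcg : Continuous g := hcx'.div hcx hnz
  have hcD : Continuous (fun t => (deriv (deriv x) t * x t - deriv x t * deriv x t) / (x t)^2) :=
    ((hcx''.mul hcx).sub (hcx'.mul hcx')).div (hcx.pow 2) (fun t => pow_ne_zero 2 (hnz t))
  -- ∫ deriv g = 0
  have hint1 : (∫ t in (0:ℝ)..T,
      (deriv (deriv x) t * x t - deriv x t * deriv x t) / (x t)^2) = 0 := by
    rw [intervalIntegral.integral_eq_sub_of_hasDerivAt (fun t _ => hgd t)
      (hcD.intervalIntegrable 0 T)]
    have h1 : g T = g 0 := by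
      have e1 : x T = x 0 := by simpa using hxper 0
      have e2 : deriv x T = deriv x 0 := by simpa using periodic_deriv' hxper 0
      simp only [hg, e1, e2]
    rw [h1, sub_self]
  -- ∫ x'/x = 0
  have hlogd : ∀ t, HasDerivAt (fun t => Real.log (x t)) (deriv x t / x t) t := by
    intro t
    have := (Real.hasDerivAt_log (hnz t)).comp t (hdy t)
    exact this.congr_deriv (by ring)
  have hint2 : (∫ t in (0:ℝ)..T, deriv x t / x t) = 0 := by
    rw [intervalIntegral.integral_eq_sub_of_hasDerivAt (fun t _ => hlogd t)
      (hcg.intervalIntegrable 0 T)]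
    rw [show (T:ℝ) = 0 + T by ring, hxper 0, sub_self]
  -- ∫ x''/x = ∫ g²
  have hptwise : ∀ t, deriv (deriv x) t / x t
      = (deriv (deriv x) t * x t - deriv x t * deriv x t) / (x t)^2 + g t * g t := by
    intro t
    have h := hnz t
    simp only [hg]
    field_simp [hg]
    ring
  have hint3 : (∫ t in (0:ℝ)..T, deriv (deriv x) t / x t) = ∫ t in (0:ℝ)..T, g t * g t := by
    rw [intervalIntegral.integral_congr (fun t _ => hptwise t)]
    rw [intervalIntegral.integral_add (g := fun t => g t * g t) (hcD.intervalIntegrable 0 T)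
      ((hcg.mul hcg).intervalIntegrable 0 T), hint1, zero_add]
  -- α = -(x'' + c x')/x a.e.
  have hcongr : (∫ t in (0:ℝ)..T, α t)
      = ∫ t in (0:ℝ)..T, -(deriv (deriv x) t / x t) - c * (deriv x t / x t) := by
    apply intervalIntegral.integral_congr_ae
    filter_upwards [hode] with t h1 _
    have h := hnz t
    field_simp
    linear_combination h1
  rw [hcongr]
  have hcont1 : Continuous (fun t => -(deriv (deriv x) t / x t)) := by
    exact (hcx''.div hcx hnz).neg
  rw [intervalIntegral.integral_sub (g := fun t => c * (deriv x t / x t)) (hcont1.intervalIntegrable 0 T)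
    ((continuous_const.mul hcg).intervalIntegrable 0 T)]
  rw [intervalIntegral.integral_neg, hint3]
  rw [intervalIntegral.integral_const_mul, hint2, mul_zero, sub_zero]
  rw [neg_nonpos]
  apply intervalIntegral.integral_nonneg hT.le
  intro t _
  exact mul_self_nonneg (g t)
open Real MeasureTheory Set intervalIntegral

lemma sign_dichotomy {y : ℝ → ℝ} (hc : Continuous y) {s e : ℝ}
    (hnz : ∀ t ∈ Ioo s e, y t ≠ 0) :
    (∀ t ∈ Ioo s e, 0 < y t) ∨ (∀ t ∈ Ioo s e, y t < 0) := by
  by_contra hcon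
  push_neg at hcon
  obtain ⟨⟨t₁, ht₁, h₁⟩, ⟨t₂, ht₂, h₂⟩⟩ := hcon
  have h₁' : y t₁ < 0 := lt_of_le_of_ne h₁ (hnz t₁ ht₁)
  have h₂' : 0 < y t₂ := lt_of_le_of_ne h₂ (Ne.symm (hnz t₂ ht₂))
  have h0 : (0:ℝ) ∈ Set.uIcc (y t₁) (y t₂) := by
    rw [Set.mem_uIcc]; left; exact ⟨h₁'.le, h₂'.le⟩
  obtain ⟨u, hu, hyu⟩ := intermediate_value_uIcc (hc.continuousOn) h0
  have huIoo : u ∈ Ioo s e := Set.ordConnected_Ioo.uIcc_subset ht₁ ht₂ hu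
  exact hnz u huIoo hyu

lemma neg_second_deriv {y : ℝ → ℝ} (hy : ContDiff ℝ 2 y) :
    ∀ t, deriv (deriv (fun u => -y u)) t = -(deriv (deriv y) t) := by
  intro t
  have h1 : (deriv (fun u => -y u)) = fun u => -(deriv y u) := funext fun u => deriv.neg
  rw [h1]
  exact deriv.neg

section wrappers
variable {y a : ℝ → ℝ} {M s e : ℝ}

lemma ode_neg (hode : ∀ᵐ t ∂(volume : Measure ℝ), deriv (deriv y) t = -(a t * y t))
    (hy : ContDiff ℝ 2 y) :
    ∀ᵐ t ∂(volume : Measure ℝ), deriv (deriv (fun u => -y u)) t = -(a t * (-(y t))) := by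
  filter_upwards [hode] with t h1
  rw [neg_second_deriv hy, h1]
  ring

lemma sturm_gap' (hy : ContDiff ℝ 2 y) (hM : 0 < M)
    (hode : ∀ᵐ t ∂(volume : Measure ℝ), deriv (deriv y) t = -(a t * y t))
    (hub : ∀ᵐ t ∂(volume : Measure ℝ), a t ≤ M)
    (hse : s < e) (hnz : ∀ t ∈ Ioo s e, y t ≠ 0) (hys : y s = 0) (hye : y e = 0)
    (hye' : deriv y e ≠ 0) : π / Real.sqrt M ≤ e - s := by
  rcases sign_dichotomy (hy.continuous) hnz with hpos | hneg
  · exact sturm_gap hy hM hode hub hse hpos hys hye hye'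
  · have hyneg : ContDiff ℝ 2 (fun u => -y u) := hy.neg
    apply sturm_gap hyneg hM (ode_neg hode hy) hub hse
      (fun t ht => by simpa using (hneg t ht)) (by simpa using hys) (by simpa using hye)
    have h1 : (deriv (fun u => -y u)) = fun u => -(deriv y u) := funext fun u => deriv.neg
    rw [h1]
    simpa using hye'

lemma sturm_eq' (hy : ContDiff ℝ 2 y) (hM : 0 < M)
    (hode : ∀ᵐ t ∂(volume : Measure ℝ), deriv (deriv y) t = -(a t * y t))
    (hub : ∀ᵐ t ∂(volume : Measure ℝ), a t ≤ M)
    (hse : s < e) (hnz : ∀ t ∈ Ioo s e, y t ≠ 0) (hys : y s = 0) (hye : y e = 0)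
    (heq : e - s = π / Real.sqrt M) :
    ∀ᵐ t ∂(volume : Measure ℝ), t ∈ Ioo s e → a t = M := by
  rcases sign_dichotomy (hy.continuous) hnz with hpos | hneg
  · exact sturm_eq hy hM hode hub hse hpos hys hye heq
  · exact sturm_eq hy.neg hM (ode_neg hode hy) hub hse
      (fun t ht => by simpa using (hneg t ht)) (by simpa using hys) (by simpa using hye) heq

end wrappers

section ysub
variable {c : ℝ} {x α : ℝ → ℝ}

lemma yE (c t : ℝ) : HasDerivAt (fun u => Real.exp (c/2*u)) (c/2 * Real.exp (c/2*t)) t := by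
  have h1 : HasDerivAt (fun u : ℝ => c/2*u) (c/2) t := by
    simpa using (hasDerivAt_id t).const_mul (c/2)
  have h2 := (Real.hasDerivAt_exp (c/2*t)).comp t h1
  have h3 : (Real.exp ∘ fun u : ℝ => c/2*u) = fun u => Real.exp (c/2*u) := rfl
  rw [h3] at h2
  exact h2.congr_deriv (by ring)

lemma y_deriv1 (hx : ContDiff ℝ 2 x) (t : ℝ) :
    HasDerivAt (fun u => Real.exp (c/2*u) * x u)
      (Real.exp (c/2*t) * (c/2 * x t + deriv x t)) t := by
  have hdx : HasDerivAt x (deriv x t) t :=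
    (((hx.of_le (by norm_num : (1:WithTop ℕ∞) ≤ 2)).differentiable one_ne_zero) t).hasDerivAt
  have := (yE c t).mul hdx
  exact this.congr_deriv (by ring)

lemma y_deriv1_eq (hx : ContDiff ℝ 2 x) :
    deriv (fun u => Real.exp (c/2*u) * x u)
      = fun t => Real.exp (c/2*t) * (c/2 * x t + deriv x t) :=
  funext fun t => (y_deriv1 hx t).deriv

lemma y_deriv2 (hx : ContDiff ℝ 2 x) (t : ℝ) :
    HasDerivAt (deriv (fun u => Real.exp (c/2*u) * x u))
      (Real.exp (c/2*t) * (c^2/4 * x t + c * deriv x t + deriv (deriv x) t)) t := by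
  rw [y_deriv1_eq hx]
  have hx1 : ContDiff ℝ 1 x := hx.of_le (by norm_num)
  have hx' : ContDiff ℝ 1 (deriv x) :=
    (contDiff_succ_iff_deriv.mp (show ContDiff ℝ (1+1) x by norm_num [hx])).2.2
  have hdx : HasDerivAt x (deriv x t) t := ((hx1.differentiable one_ne_zero) t).hasDerivAt
  have hdx' : HasDerivAt (deriv x) (deriv (deriv x) t) t :=
    ((hx'.differentiable one_ne_zero) t).hasDerivAt
  have hu : HasDerivAt (fun u => c/2 * x u + deriv x u)
      (c/2 * deriv x t + deriv (deriv x) t) t := (hdx.const_mul (c/2)).add hdx'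
  have := (yE c t).mul hu
  exact this.congr_deriv (by ring)

lemma y_contDiff (hx : ContDiff ℝ 2 x) :
    ContDiff ℝ 2 (fun u => Real.exp (c/2*u) * x u) := by
  apply ContDiff.mul _ hx
  exact (Real.contDiff_exp.comp (contDiff_const.mul contDiff_id)).of_le le_top

lemma y_ode (hx : ContDiff ℝ 2 x)
    (hode : ∀ᵐ t ∂(volume : Measure ℝ),
      deriv (deriv x) t + c * deriv x t + α t * x t = 0) :
    ∀ᵐ t ∂(volume : Measure ℝ),
      deriv (deriv (fun u => Real.exp (c/2*u) * x u)) t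
        = -((α t - c^2/4) * (Real.exp (c/2*t) * x t)) := by
  filter_upwards [hode] with t h1
  rw [(y_deriv2 hx t).deriv]
  have : deriv (deriv x) t + c * deriv x t = -(α t * x t) := by linarith
  linear_combination Real.exp (c/2*t) * this

end ysub

lemma isolated_zero {x : ℝ → ℝ} {τ d : ℝ} (hd : HasDerivAt x d τ) (h0 : x τ = 0)
    (hne : d ≠ 0) : ∃ ε > 0, ∀ t, |t - τ| < ε → t ≠ τ → x t ≠ 0 := by
  have hd' : HasDerivWithinAt x d {τ}ᶜ τ := hd.hasDerivWithinAt
  rw [hasDerivWithinAt_iff_tendsto_slope] at hd'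
  have hcompl : {τ}ᶜ \ {τ} = ({τ}ᶜ : Set ℝ) := Set.diff_singleton_eq_self (by simp)
  rw [hcompl] at hd'
  have hev : ∀ᶠ t in nhdsWithin τ {τ}ᶜ, slope x τ t ≠ 0 := hd'.eventually_ne hne
  rw [eventually_nhdsWithin_iff] at hev
  rw [Metric.eventually_nhds_iff] at hev
  obtain ⟨ε, hε, h⟩ := hev
  refine ⟨ε, hε, fun t ht htne h0t => ?_⟩
  have := h (show dist t τ < ε by rwa [Real.dist_eq]) (by simpa using htne)
  rw [slope_def_field, h0, h0t] at this
  simp at this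

lemma periodic_null_transfer {α : ℝ → ℝ} {T Bc t₀ : ℝ} (hT : 0 < T)
    (hper : Function.Periodic α T)
    (hnull0 : volume ({t | α t ≠ Bc} ∩ Icc t₀ (t₀+T)) = 0) :
    volume ({t | α t ≠ Bc} ∩ Icc (0:ℝ) T) = 0 := by
  have hshift : ∀ k : ℤ, volume ({t | α t ≠ Bc} ∩ Icc (t₀+k*T) (t₀+k*T+T)) = 0 := by
    intro k
    have heqset : {t | α t ≠ Bc} ∩ Icc (t₀+k*T) (t₀+k*T+T)
        = (fun t => t + (-(k*T))) ⁻¹' ({t | α t ≠ Bc} ∩ Icc t₀ (t₀+T)) := by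
      ext t
      simp only [Set.mem_inter_iff, Set.mem_preimage, Set.mem_setOf_eq, Set.mem_Icc]
      constructor
      · rintro ⟨h1, h2, h3⟩
        refine ⟨?_, by linarith, by linarith⟩
        rw [show t + -(↑k*T) = t - ↑k*T by ring, hper.sub_int_mul_eq k]
        exact h1
      · rintro ⟨h1, h2, h3⟩
        rw [show t + -(↑k*T) = t - ↑k*T by ring, hper.sub_int_mul_eq k] at h1
        exact ⟨h1, by linarith, by linarith⟩
    rw [heqset, measure_preimage_add_right]
    exact hnull0
  obtain ⟨k, hk1, hk2⟩ : ∃ k : ℤ, (k:ℝ) * T ≤ -t₀ ∧ -t₀ < ((k:ℝ)+1) * T := by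
    refine ⟨⌊(-t₀)/T⌋, (le_div_iff₀ hT).mp (Int.floor_le _), ?_⟩
    have := (div_lt_iff₀ hT).mp (Int.lt_floor_add_one ((-t₀)/T))
    linarith
  refine measure_mono_null (t := ({t | α t ≠ Bc} ∩ Icc (t₀+k*T) (t₀+k*T+T))
      ∪ ({t | α t ≠ Bc} ∩ Icc (t₀+(k+1)*T) (t₀+(k+1)*T+T))) ?_ ?_
  · intro u hu
    obtain ⟨h1, h2⟩ := hu
    obtain ⟨hu1, hu2⟩ := h2
    rcases le_or_gt u (t₀+k*T+T) with h | h
    · left; exact ⟨h1, by linarith, h⟩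
    · right
      refine ⟨h1, ?_, ?_⟩ <;> push_cast <;> linarith
  · apply measure_union_null (hshift k)
    have := hshift (k+1)
    push_cast at this ⊢
    convert this using 3 <;> ring

/-- If `α` is `T`-periodic, essentially bounded, `α ≪ (2π)²/T² + c²/4` and `α` has positive
average, then `x'' + c x' + α x = 0` has no nontrivial `T`-periodic solution. -/
theorem stmt2 (c T : ℝ) (hT : 0 < T) (α : ℝ → ℝ) (hmeas : Measurable α)
    (hper : Function.Periodic α T)
    (hbdd : ∃ C : ℝ, ∀ᵐ t ∂(volume : Measure ℝ), |α t| ≤ C)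
    (hub : ∀ᵐ t ∂(volume : Measure ℝ), α t ≤ (2 * π) ^ 2 / T ^ 2 + c ^ 2 / 4)
    (hstrict : 0 < volume {t ∈ Icc (0 : ℝ) T | α t < (2 * π) ^ 2 / T ^ 2 + c ^ 2 / 4})
    (havg : 0 < (1 / T) * ∫ t in (0 : ℝ)..T, α t)
    (x : ℝ → ℝ) (hx : ContDiff ℝ 2 x) (hxper : Function.Periodic x T)
    (hode : ∀ᵐ t ∂(volume : Measure ℝ),
      deriv (deriv x) t + c * deriv x t + α t * x t = 0) :
    ∀ t, x t = 0 := by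
  by_contra hcon
  push_neg at hcon
  obtain ⟨t₁, ht₁⟩ := hcon
  obtain ⟨C, hC⟩ := hbdd
  have hcx : Continuous x := hx.continuous
  have hx1 : ContDiff ℝ 1 x := hx.of_le (by norm_num)
  have hdx : ∀ t, HasDerivAt x (deriv x t) t :=
    fun t => ((hx1.differentiable one_ne_zero) t).hasDerivAt
  -- boundedness constant
  set K : ℝ := |c| + max C 0 with hKdef
  have hK0 : 0 ≤ K := by positivity
  have hKbound : ∀ᵐ t ∂(volume : Measure ℝ),
      |deriv (deriv x) t| ≤ K * (|x t| + |deriv x t|) := by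
    filter_upwards [hode, hC] with t h1 h2
    have hxx : deriv (deriv x) t = -(c * deriv x t) - α t * x t := by linarith
    rw [hxx]
    calc |(-(c * deriv x t)) - α t * x t| ≤ |(-(c * deriv x t))| + |α t * x t| :=
          abs_sub _ _
      _ = |c| * |deriv x t| + |α t| * |x t| := by rw [abs_neg, abs_mul, abs_mul]
      _ ≤ |c| * |deriv x t| + max C 0 * |x t| := by
          have : |α t| ≤ max C 0 := le_trans h2 (le_max_left _ _)
          have := mul_le_mul_of_nonneg_right this (abs_nonneg (x t))
          linarith
      _ ≤ K * (|x t| + |deriv x t|) := by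
          have h3 : |c| ≤ K := by simp [hKdef]
          have h4 : max C 0 ≤ K := by simp [hKdef]
          nlinarith [abs_nonneg (x t), abs_nonneg (deriv x t)]
  -- simple zeros
  have hsimple : ∀ τ, x τ = 0 → deriv x τ ≠ 0 := by
    intro τ hτ hdτ
    exact ht₁ (glob_vanish hx hK0 hKbound hτ hdτ t₁)
  by_cases hzero : ∃ τ, x τ = 0
  · obtain ⟨t₀, ht₀⟩ := hzero
    -- setup for Sturm comparison
    set M : ℝ := (2 * π) ^ 2 / T ^ 2 with hMdef
    have hπ : 0 < π := Real.pi_pos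
    have hM : 0 < M := by positivity
    have hsqrtM : Real.sqrt M = 2 * π / T := by
      rw [show M = (2 * π / T) ^ 2 by rw [hMdef]; field_simp]
      exact Real.sqrt_sq (by positivity)
    have hhalf : π / Real.sqrt M = T / 2 := by
      rw [hsqrtM]; field_simp
    have hy2 : ContDiff ℝ 2 (fun u => Real.exp (c/2*u) * x u) := y_contDiff hx
    have hodey : ∀ᵐ t ∂(volume : Measure ℝ),
        deriv (deriv (fun u => Real.exp (c/2*u) * x u)) t
          = -((fun t => α t - c^2/4) t * (fun u => Real.exp (c/2*u) * x u) t) :=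
      y_ode hx hode
    have huba : ∀ᵐ t ∂(volume : Measure ℝ), (fun t => α t - c^2/4) t ≤ M := by
      filter_upwards [hub] with t h1
      simp only [hMdef]
      linarith
    have hEpos : ∀ u : ℝ, 0 < Real.exp (c/2*u) := fun u => Real.exp_pos _
    have hyzero : ∀ u, x u = 0 → (fun u => Real.exp (c/2*u) * x u) u = 0 := by
      intro u hu; simp [hu]
    have hynz : ∀ u, x u ≠ 0 → (fun u => Real.exp (c/2*u) * x u) u ≠ 0 := by
      intro u hu
      simp only []
      exact mul_ne_zero (hEpos u).ne' hu
    have hyd : ∀ τ, x τ = 0 → deriv (fun u => Real.exp (c/2*u) * x u) τ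
        = Real.exp (c/2*τ) * deriv x τ := by
      intro τ hτ
      rw [y_deriv1_eq hx]
      simp [hτ]
    -- zeros at t₀ and t₀ + T
    have ht₀T : x (t₀ + T) = 0 := by rw [hxper t₀]; exact ht₀
    obtain ⟨ε₁, hε₁, hiso₁⟩ := isolated_zero (hdx t₀) ht₀ (hsimple t₀ ht₀)
    obtain ⟨ε₂, hε₂, hiso₂⟩ := isolated_zero (hdx (t₀+T)) ht₀T (hsimple _ ht₀T)
    set ε₁' : ℝ := min (ε₁/2) (T/2) with hε₁'def
    set ε₂' : ℝ := min (ε₂/2) (T/2) with hε₂'def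
    have hε₁'pos : 0 < ε₁' := lt_min (by linarith) (by linarith)
    have hε₂'pos : 0 < ε₂' := lt_min (by linarith) (by linarith)
    have hε₁'le : ε₁' < ε₁ := lt_of_le_of_lt (min_le_left _ _) (by linarith)
    have hε₂'le : ε₂' < ε₂ := lt_of_le_of_lt (min_le_left _ _) (by linarith)
    have hε₁'T : ε₁' ≤ T := le_trans (min_le_right _ _) (by linarith)
    have hε₂'T : ε₂' ≤ T := le_trans (min_le_right _ _) (by linarith)
    -- first zero after t₀
    set A : Set ℝ := {u | x u = 0} ∩ Icc (t₀ + ε₁') (t₀ + T) with hAdef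
    have hAclosed : IsClosed A :=
      (isClosed_eq hcx continuous_const).inter isClosed_Icc
    have hAcomp : IsCompact A :=
      isCompact_Icc.of_isClosed_subset hAclosed Set.inter_subset_right
    have hAne : A.Nonempty := ⟨t₀ + T, ht₀T, by constructor <;> linarith⟩
    set s₁ : ℝ := sInf A with hs₁def
    have hs₁A : s₁ ∈ A := hAcomp.sInf_mem hAne
    have hxs₁ : x s₁ = 0 := hs₁A.1
    have hs₁lb : t₀ + ε₁' ≤ s₁ := hs₁A.2.1
    have hs₁ub : s₁ ≤ t₀ + T := hs₁A.2.2
    have hs₁t₀ : t₀ < s₁ := by linarith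
    have hno1 : ∀ u ∈ Ioo t₀ s₁, x u ≠ 0 := by
      intro u hu hxu
      rcases lt_or_ge u (t₀ + ε₁') with hc1 | hc1
      · exact hiso₁ u (by rw [abs_lt]; constructor <;> [linarith [hu.1]; linarith]) 
          (by intro h; rw [h] at hu; exact lt_irrefl t₀ hu.1) hxu
      · have huA : u ∈ A := ⟨hxu, hc1, by linarith [hu.2]⟩
        have : s₁ ≤ u := csInf_le hAcomp.bddBelow huA
        linarith [hu.2]
    by_cases hcase : s₁ = t₀ + T
    · -- one bump case: x has constant sign on a punctured period, local extremum at t₀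
      have hnz : ∀ u ∈ Ioo t₀ (t₀ + T), x u ≠ 0 := by
        rw [← hcase]; exact hno1
      rcases sign_dichotomy hcx hnz with hp | hn
      · have hmin : IsLocalMin x t₀ := by
          filter_upwards [Ioo_mem_nhds (show t₀ - T < t₀ by linarith)
            (show t₀ < t₀ + T by linarith)] with u hu
          rw [ht₀]
          rcases lt_trichotomy u t₀ with h | h | h
          · have : u + T ∈ Ioo t₀ (t₀ + T) := ⟨by linarith [hu.1], by linarith⟩
            have := hp (u + T) this
            rw [hxper u] at this
            exact this.le
          · rw [h, ht₀]
          · exact (hp u ⟨h, hu.2⟩).le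
        exact hsimple t₀ ht₀ hmin.deriv_eq_zero
      · have hmax : IsLocalMax x t₀ := by
          filter_upwards [Ioo_mem_nhds (show t₀ - T < t₀ by linarith)
            (show t₀ < t₀ + T by linarith)] with u hu
          rw [ht₀]
          rcases lt_trichotomy u t₀ with h | h | h
          · have : u + T ∈ Ioo t₀ (t₀ + T) := ⟨by linarith [hu.1], by linarith⟩
            have := hn (u + T) this
            rw [hxper u] at this
            exact this.le
          · rw [h, ht₀]
          · exact (hn u ⟨h, hu.2⟩).le
        exact hsimple t₀ ht₀ hmax.deriv_eq_zero
    · -- two bumps case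
      have hs₁lt : s₁ < t₀ + T := lt_of_le_of_ne hs₁ub hcase
      set B' : Set ℝ := {u | x u = 0} ∩ Icc t₀ (t₀ + T - ε₂') with hB'def
      have hB'closed : IsClosed B' :=
        (isClosed_eq hcx continuous_const).inter isClosed_Icc
      have hB'comp : IsCompact B' :=
        isCompact_Icc.of_isClosed_subset hB'closed Set.inter_subset_right
      have hB'ne : B'.Nonempty := ⟨t₀, ht₀, by constructor <;> linarith⟩
      set s₂ : ℝ := sSup B' with hs₂def
      have hs₂B : s₂ ∈ B' := hB'comp.sSup_mem hB'ne
      have hxs₂ : x s₂ = 0 := hs₂B.1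
      have hs₂lb : t₀ ≤ s₂ := hs₂B.2.1
      have hs₂ub : s₂ ≤ t₀ + T - ε₂' := hs₂B.2.2
      have hs₂lt : s₂ < t₀ + T := by linarith
      have hs₁B : s₁ ∈ B' := by
        refine ⟨hxs₁, by linarith, ?_⟩
        by_contra hcon2
        push_neg at hcon2
        exact hiso₂ s₁ (by rw [abs_lt]; constructor <;> linarith)
          (by intro h; exact hcase h) hxs₁
      have hs₁s₂ : s₁ ≤ s₂ := le_csSup hB'comp.bddAbove hs₁B
      have hno2 : ∀ u ∈ Ioo s₂ (t₀ + T), x u ≠ 0 := by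
        intro u hu hxu
        rcases le_or_gt u (t₀ + T - ε₂') with hc1 | hc1
        · have huB : u ∈ B' := ⟨hxu, by linarith [hu.1], hc1⟩
          have : u ≤ s₂ := le_csSup hB'comp.bddAbove huB
          linarith [hu.1]
        · exact hiso₂ u (by rw [abs_lt]; constructor <;> [linarith; linarith [hu.2]])
            (by intro h; rw [h] at hu; exact lt_irrefl (t₀+T) hu.2) hxu
      -- apply Sturm comparison
      have hynz1 : ∀ u ∈ Ioo t₀ s₁, (fun u => Real.exp (c/2*u) * x u) u ≠ 0 :=
        fun u hu => hynz u (hno1 u hu)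
      have hynz2 : ∀ u ∈ Ioo s₂ (t₀+T), (fun u => Real.exp (c/2*u) * x u) u ≠ 0 :=
        fun u hu => hynz u (hno2 u hu)
      have hyd1 : deriv (fun u => Real.exp (c/2*u) * x u) s₁ ≠ 0 := by
        rw [hyd s₁ hxs₁]
        exact mul_ne_zero (hEpos s₁).ne' (hsimple s₁ hxs₁)
      have hyd2' : deriv (fun u => Real.exp (c/2*u) * x u) (t₀+T) ≠ 0 := by
        rw [hyd _ ht₀T]
        exact mul_ne_zero (hEpos _).ne' (hsimple _ ht₀T)
      have gap1 : π / Real.sqrt M ≤ s₁ - t₀ :=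
        sturm_gap' hy2 hM hodey huba hs₁t₀ hynz1 (hyzero t₀ ht₀) (hyzero s₁ hxs₁) hyd1
      have gap2 : π / Real.sqrt M ≤ (t₀ + T) - s₂ :=
        sturm_gap' hy2 hM hodey huba hs₂lt hynz2 (hyzero s₂ hxs₂) (hyzero _ ht₀T) hyd2'
      rw [hhalf] at gap1 gap2
      have heq1 : s₁ - t₀ = π / Real.sqrt M := by rw [hhalf]; linarith
      have heq2 : (t₀ + T) - s₂ = π / Real.sqrt M := by rw [hhalf]; linarith
      have hs₁eq : s₁ = t₀ + T/2 := by linarith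
      have hs₂eq : s₂ = t₀ + T/2 := by linarith
      have ha1 := sturm_eq' hy2 hM hodey huba hs₁t₀ hynz1 (hyzero t₀ ht₀)
        (hyzero s₁ hxs₁) heq1
      have ha2 := sturm_eq' hy2 hM hodey huba hs₂lt hynz2 (hyzero s₂ hxs₂)
        (hyzero _ ht₀T) heq2
      -- α = M + c²/4 a.e. on [t₀, t₀+T] away from three points
      set Bc : ℝ := (2 * π) ^ 2 / T ^ 2 + c ^ 2 / 4 with hBcdef
      have hae : ∀ᵐ t ∂(volume : Measure ℝ),
          t ∈ Icc t₀ (t₀+T) → t ≠ t₀ → t ≠ t₀ + T/2 → t ≠ t₀+T → α t = Bc := by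
        filter_upwards [ha1, ha2] with t h1 h2 htI htn0 htn1 htn2
        rcases lt_trichotomy t (t₀ + T/2) with h | h | h
        · have : t ∈ Ioo t₀ s₁ := ⟨lt_of_le_of_ne htI.1 (Ne.symm htn0), by rw [hs₁eq]; exact h⟩
          have := h1 this
          simp only [hMdef] at this
          rw [hBcdef]; linarith
        · exact absurd h htn1
        · have : t ∈ Ioo s₂ (t₀+T) := ⟨by rw [hs₂eq]; exact h,
            lt_of_le_of_ne htI.2 htn2⟩
          have := h2 this
          simp only [hMdef] at this
          rw [hBcdef]; linarith
      have hnull0 : volume ({t | α t ≠ Bc} ∩ Icc t₀ (t₀+T)) = 0 := by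
        have hsub : {t | α t ≠ Bc} ∩ Icc t₀ (t₀+T) ⊆
            {t | ¬(t ∈ Icc t₀ (t₀+T) → t ≠ t₀ → t ≠ t₀ + T/2 → t ≠ t₀+T → α t = Bc)}
              ∪ {t₀, t₀ + T/2, t₀+T} := by
          intro t ⟨htα, htI⟩
          by_cases h0 : t = t₀
          · right; left; exact h0
          by_cases h1 : t = t₀ + T/2
          · right; right; left; exact h1
          by_cases h2 : t = t₀+T
          · right; right; right; exact h2
          left
          intro hcontra
          exact htα (hcontra htI h0 h1 h2)
        apply measure_mono_null hsub
        apply measure_union_null (ae_iff.mp hae)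
        apply Set.Finite.measure_zero _ volume
        exact (Set.finite_singleton _).insert _ |>.insert _
      -- transfer by periodicity to [0, T]
      have hnullIcc : volume ({t | α t ≠ Bc} ∩ Icc (0:ℝ) T) = 0 :=
        periodic_null_transfer hT hper hnull0
      have hstrictsub : {t ∈ Icc (0:ℝ) T | α t < (2 * π) ^ 2 / T ^ 2 + c ^ 2 / 4}
          ⊆ {t | α t ≠ Bc} ∩ Icc (0:ℝ) T := by
        intro u hu
        obtain ⟨h1, h2⟩ := hu
        exact ⟨by rw [hBcdef]; exact ne_of_lt h2, h1⟩
      have hfin := measure_mono_null hstrictsub hnullIcc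
      rw [hfin] at hstrict
      exact lt_irrefl 0 hstrict
  · push_neg at hzero
    have hint := avg_nonpos_of_no_zero c T hT α x hx hxper hode hzero
    have h1T : 0 < 1/T := by positivity
    nlinarith [havg, hint, h1T]
end

section
/- Let c ∈ ℝ, T > 0, and let α ≪ (2π)²/T² + c²/4 be T-periodic and essentially bounded. If x is a T-periodic solution of x'' + c x' + α(t) x = 0, then either x ≡ 0 or x(t) ≠ 0 for every t ∈ ℝ. -/
open Real MeasureTheory Set

lemma dense_aux {N : Set ℝ} (hN : volume N = 0) {U : Set ℝ} (hU : IsOpen U) :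
    U ⊆ closure (U \ N) := by
  intro t ht
  rw [_root_.mem_closure_iff]
  intro V hV htV
  by_contra hemp
  rw [Set.not_nonempty_iff_eq_empty] at hemp
  have hsub : V ∩ U ⊆ N := by
    intro s hs
    by_contra hsN
    exact absurd (Set.eq_empty_iff_forall_notMem.mp hemp s ⟨hs.1, hs.2, hsN⟩) (fun h => h)
  have hpos : 0 < volume (V ∩ U) := (hV.inter hU).measure_pos volume ⟨t, htV, ht⟩
  have : volume (V ∩ U) = 0 := le_antisymm (hN ▸ measure_mono hsub) zero_le
  simp [this] at hpos

lemma ev_right {x : ℝ → ℝ} {d s : ℝ} (h : HasDerivAt x d s) (h0 : x s = 0) (hd : 0 < d) :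
    (∀ᶠ t in nhdsWithin s (Set.Ioi s), 0 < x t) ∧
    (∀ᶠ t in nhdsWithin s (Set.Iio s), x t < 0) := by
  have hs := hasDerivAt_iff_tendsto_slope.mp h
  have hev : ∀ᶠ t in nhdsWithin s {s}ᶜ, 0 < slope x s t :=
    hs.eventually (eventually_gt_nhds hd)
  have key : ∀ t, t ≠ s → 0 < slope x s t → (s < t → 0 < x t) ∧ (t < s → x t < 0) := by
    intro t hts hslope
    rw [slope_def_field, h0] at hslope
    constructor
    · intro hlt
      have h1 : (0:ℝ) < t - s := sub_pos.mpr hlt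
      have := mul_pos hslope h1
      rw [div_mul_cancel₀ _ (ne_of_gt h1)] at this
      linarith
    · intro hlt
      have h1 : t - s < 0 := sub_neg.mpr hlt
      have := mul_neg_of_pos_of_neg hslope h1
      rw [div_mul_cancel₀ _ (ne_of_lt h1)] at this
      linarith
  constructor
  · have h2 := hev.filter_mono (nhdsWithin_mono s (fun t (ht : t ∈ Set.Ioi s) => ne_of_gt ht : Set.Ioi s ⊆ {s}ᶜ))
    refine h2.mp (eventually_mem_nhdsWithin.mono ?_)
    intro t ht hslope
    exact (key t (ne_of_gt ht) hslope).1 ht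
  · have h2 := hev.filter_mono (nhdsWithin_mono s (fun t (ht : t ∈ Set.Iio s) => ne_of_lt ht : Set.Iio s ⊆ {s}ᶜ))
    refine h2.mp (eventually_mem_nhdsWithin.mono ?_)
    intro t ht hslope
    exact (key t (ne_of_lt ht) hslope).2 ht

lemma uniq_aux (c C : ℝ) (α x x' x'' : ℝ → ℝ)
    (hd1 : ∀ t, HasDerivAt x (x' t) t) (hd2 : ∀ t, HasDerivAt x' (x'' t) t)
    (hc2 : Continuous x'') {N : Set ℝ} (hN : volume N = 0)
    (hgood : ∀ t ∉ N, x'' t + c * x' t + α t * x t = 0 ∧ |α t| ≤ C)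
    (s : ℝ) (h0 : x s = 0) (h1 : x' s = 0) : ∀ t, x t = 0 := by
  set K : ℝ := 1 + |C| + 2*|c| with hK
  have hcx : Continuous x := continuous_iff_continuousAt.mpr fun t => (hd1 t).continuousAt
  have hcx' : Continuous x' := continuous_iff_continuousAt.mpr fun t => (hd2 t).continuousAt
  set f : ℝ → ℝ := fun t => x t ^ 2 + x' t ^ 2 with hf
  set D : ℝ → ℝ := fun t => 2 * x t * x' t + 2 * x' t * x'' t with hD
  have hdf : ∀ t, HasDerivAt f (D t) t := by
    intro t
    have := ((hd1 t).pow 2).add ((hd2 t).pow 2)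
    refine this.congr_deriv ?_
    simp only [hD]
    push_cast
    ring
  have hcD : Continuous D := by fun_prop
  have hcf : Continuous f := by fun_prop
  -- pointwise bound |D| ≤ K f off N, then everywhere by continuity
  have hbound : ∀ t, |D t| ≤ K * f t := by
    have hgood' : ∀ t ∉ N, |D t| ≤ K * f t := by
      intro t htN
      obtain ⟨heq, hle⟩ := hgood t htN
      have hx'' : x'' t = -(c * x' t) - α t * x t := by linarith
      have h2 : |α t| * (2 * |x t| * |x' t|) ≤ |C| * (x t ^ 2 + x' t ^ 2) := by
        have h3 : 2 * |x t| * |x' t| ≤ x t ^ 2 + x' t ^ 2 := by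
          nlinarith [sq_nonneg (|x t| - |x' t|), sq_abs (x t), sq_abs (x' t)]
        have h4 : |α t| ≤ |C| := le_trans hle (le_abs_self C)
        calc |α t| * (2 * |x t| * |x' t|) ≤ |C| * (2 * |x t| * |x' t|) := by
              apply mul_le_mul_of_nonneg_right h4; positivity
          _ ≤ |C| * (x t ^ 2 + x' t ^ 2) := by
              apply mul_le_mul_of_nonneg_left h3 (abs_nonneg C)
      have hDval : D t = 2 * x t * x' t - 2 * c * x' t ^ 2 - 2 * α t * x t * x' t := by
        simp only [hD, hx'']; ring
      rw [hDval]
      have e1 : |2 * x t * x' t - 2 * c * x' t ^ 2 - 2 * α t * x t * x' t|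
          ≤ 2 * |x t| * |x' t| + 2 * |c| * x' t ^ 2 + |α t| * (2 * |x t| * |x' t|) := by
        have := abs_add_le (2 * x t * x' t - 2 * c * x' t ^ 2) (-(2 * α t * x t * x' t))
        have a1 : |2 * x t * x' t| ≤ 2 * |x t| * |x' t| := by
          rw [abs_mul, abs_mul]; simp [abs_of_nonneg]
        have a2 : |(-(2 * c * x' t ^ 2))| ≤ 2 * |c| * x' t ^ 2 := by
          rw [abs_neg, abs_mul, abs_mul]; simp [abs_of_nonneg, sq_abs, abs_of_nonneg (sq_nonneg (x' t))]
        have a3 : |(-(2 * α t * x t * x' t))| ≤ |α t| * (2 * |x t| * |x' t|) := by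
          rw [abs_neg, abs_mul, abs_mul, abs_mul]; simp [abs_of_nonneg]; ring_nf; nlinarith [abs_nonneg (α t), abs_nonneg (x t), abs_nonneg (x' t)]
        calc |2 * x t * x' t - 2 * c * x' t ^ 2 - 2 * α t * x t * x' t|
            = |(2 * x t * x' t + -(2 * c * x' t ^ 2)) + -(2 * α t * x t * x' t)| := by ring_nf
          _ ≤ |2 * x t * x' t + -(2 * c * x' t ^ 2)| + |(-(2 * α t * x t * x' t))| := abs_add_le _ _
          _ ≤ (|2 * x t * x' t| + |(-(2 * c * x' t ^ 2))|) + |(-(2 * α t * x t * x' t))| := by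
              have := abs_add_le (2 * x t * x' t) (-(2 * c * x' t ^ 2)); linarith
          _ ≤ 2 * |x t| * |x' t| + 2 * |c| * x' t ^ 2 + |α t| * (2 * |x t| * |x' t|) := by linarith
      have h3 : 2 * |x t| * |x' t| ≤ x t ^ 2 + x' t ^ 2 := by
        nlinarith [sq_nonneg (|x t| - |x' t|), sq_abs (x t), sq_abs (x' t)]
      have h5 : 2 * |c| * x' t ^ 2 ≤ 2 * |c| * (x t ^ 2 + x' t ^ 2) := by nlinarith [sq_nonneg (x t), abs_nonneg c]
      have : K * f t = (x t ^ 2 + x' t ^ 2) + |C| * (x t ^ 2 + x' t ^ 2) + 2*|c| * (x t ^ 2 + x' t ^ 2) := by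
        simp only [hK, hf]; ring
      rw [this]; linarith
    -- extend by continuity
    have hcl : IsClosed {t | |D t| ≤ K * f t} :=
      isClosed_le (by fun_prop) (by fun_prop)
    intro t
    have : (Set.univ : Set ℝ) ⊆ closure (Set.univ \ N) := dense_aux hN isOpen_univ
    have ht : t ∈ closure (Set.univ \ N) := this (Set.mem_univ t)
    have hsub : Set.univ \ N ⊆ {t | |D t| ≤ K * f t} := fun u hu => hgood' u hu.2
    exact (hcl.closure_subset_iff.mpr hsub) ht
  have hf0 : f s = 0 := by simp [hf, h0, h1]
  have hfnn : ∀ t, 0 ≤ f t := fun t => by positivity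
  -- right of s
  have hright : ∀ t, s ≤ t → f t = 0 := by
    intro t hst
    set g : ℝ → ℝ := fun u => f u * Real.exp (-(K * u)) with hg
    have hdg : ∀ u, HasDerivAt g ((D u - K * f u) * Real.exp (-(K * u))) u := by
      intro u
      have he : HasDerivAt (fun u => Real.exp (-(K * u))) (Real.exp (-(K * u)) * (-K)) u := by
        have : HasDerivAt (fun u : ℝ => -(K * u)) (-K) u := by
          exact (((hasDerivAt_id' u).const_mul K).neg).congr_deriv (by ring)
        exact this.exp
      have := (hdf u).mul he
      refine this.congr_deriv ?_
      ring
    have hmono : Antitone g := by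
      apply antitone_of_deriv_nonpos
      · exact fun u => (hdg u).differentiableAt
      · intro u
        rw [(hdg u).deriv]
        have h1 : D u - K * f u ≤ 0 := by
          have := hbound u; have := abs_le.mp this; linarith [this.2]
        have := Real.exp_pos (-(K * u))
        nlinarith
    have : g t ≤ g s := hmono hst
    have hgs : g s = 0 := by simp [hg, hf0]
    have hgt : 0 ≤ g t := by
      have := Real.exp_pos (-(K * t)); simp only [hg]; positivity
    have : g t = 0 := le_antisymm (hgs ▸ this) hgt
    have hexp := Real.exp_pos (-(K * t))
    have : f t * Real.exp (-(K * t)) = 0 := this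
    rcases mul_eq_zero.mp this with h | h
    · exact h
    · exact absurd h (ne_of_gt hexp)
  -- left of s
  have hleft : ∀ t, t ≤ s → f t = 0 := by
    intro t hst
    set g : ℝ → ℝ := fun u => f u * Real.exp (K * u) with hg
    have hdg : ∀ u, HasDerivAt g ((D u + K * f u) * Real.exp (K * u)) u := by
      intro u
      have he : HasDerivAt (fun u => Real.exp (K * u)) (Real.exp (K * u) * K) u := by
        simpa using ((hasDerivAt_id u).const_mul K).exp
      have := (hdf u).mul he
      refine this.congr_deriv ?_
      ring
    have hmono : Monotone g := by
      apply monotone_of_deriv_nonneg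
      · exact fun u => (hdg u).differentiableAt
      · intro u
        rw [(hdg u).deriv]
        have h1 : 0 ≤ D u + K * f u := by
          have := abs_le.mp (hbound u); linarith [this.1]
        have := Real.exp_pos (K * u)
        nlinarith
    have : g t ≤ g s := hmono hst
    have hgs : g s = 0 := by simp [hg, hf0]
    have hgt : 0 ≤ g t := by
      have := Real.exp_pos (K * t); simp only [hg]; positivity
    have : g t = 0 := le_antisymm (hgs ▸ this) hgt
    have hexp := Real.exp_pos (K * t)
    rcases mul_eq_zero.mp this with h | h
    · exact h
    · exact absurd h (ne_of_gt hexp)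
  intro t
  have hft : f t = 0 := by
    rcases le_total s t with h | h
    · exact hright t h
    · exact hleft t h
  simp only [hf] at hft
  have hsq : x t ^ 2 = 0 := by nlinarith [sq_nonneg (x' t), sq_nonneg (x t)]
  exact (pow_eq_zero_iff two_ne_zero).mp hsq

lemma sturm_aux (c ω : ℝ) (hω : 0 < ω) (α x x' x'' : ℝ → ℝ)
    (hd1 : ∀ t, HasDerivAt x (x' t) t) (hd2 : ∀ t, HasDerivAt x' (x'' t) t)
    (hc2 : Continuous x'') {N : Set ℝ} (hN : volume N = 0)
    (hgood : ∀ t ∉ N, x'' t + c * x' t + α t * x t = 0 ∧ α t ≤ ω^2 + c^2/4)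
    (a b : ℝ) (hab : a < b) (hxa : x a = 0) (hxb : x b = 0)
    (hpos : ∀ t ∈ Ioo a b, 0 < x t) (hxb' : x' b < 0) :
    π / ω ≤ b - a ∧ (b - a = π / ω → ∀ t ∈ Ioo a b, t ∉ N → α t = ω^2 + c^2/4) := by
  have hcx : Continuous x := continuous_iff_continuousAt.mpr fun t => (hd1 t).continuousAt
  have hcx' : Continuous x' := continuous_iff_continuousAt.mpr fun t => (hd2 t).continuousAt
  rcases lt_or_ge (π / ω) (b - a) with hgt | hble
  · exact ⟨le_of_lt hgt, fun he => absurd he (by linarith)⟩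
  set E : ℝ → ℝ := fun t => Real.exp (c/2 * t) with hE
  set Y : ℝ → ℝ := fun t => E t * x t with hY
  set Y1 : ℝ → ℝ := fun t => E t * (c/2 * x t + x' t) with hY1
  set Y2 : ℝ → ℝ := fun t => E t * (c^2/4 * x t + c * x' t + x'' t) with hY2
  set z : ℝ → ℝ := fun t => Real.sin (ω * (t - a)) with hz
  set z1 : ℝ → ℝ := fun t => ω * Real.cos (ω * (t - a)) with hz1
  set z2 : ℝ → ℝ := fun t => -(ω^2) * Real.sin (ω * (t - a)) with hz2
  set W : ℝ → ℝ := fun t => Y t * z1 t - Y1 t * z t with hW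
  set W1 : ℝ → ℝ := fun t => Y t * z2 t - Y2 t * z t with hW1
  have hdE : ∀ t, HasDerivAt E (c/2 * E t) t := by
    intro t
    have := ((hasDerivAt_id t).const_mul (c/2)).exp
    simpa [hE, mul_comm] using this
  have hdY : ∀ t, HasDerivAt Y (Y1 t) t := by
    intro t
    have := (hdE t).mul (hd1 t)
    refine this.congr_deriv ?_
    simp only [hY1]; ring
  have hdY1 : ∀ t, HasDerivAt Y1 (Y2 t) t := by
    intro t
    have hin : HasDerivAt (fun t => c/2 * x t + x' t) (c/2 * x' t + x'' t) t :=
      ((hd1 t).const_mul (c/2)).add (hd2 t)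
    have := (hdE t).mul hin
    refine this.congr_deriv ?_
    simp only [hY2]; ring
  have hdin : ∀ t, HasDerivAt (fun t => ω * (t - a)) ω t := by
    intro t
    simpa using ((hasDerivAt_id t).sub_const a).const_mul ω
  have hdz : ∀ t, HasDerivAt z (z1 t) t := by
    intro t
    have := (hdin t).sin
    simpa [hz, hz1, mul_comm] using this
  have hdz1 : ∀ t, HasDerivAt z1 (z2 t) t := by
    intro t
    have := ((hdin t).cos).const_mul ω
    refine this.congr_deriv ?_
    simp only [hz2]; ring
  have hdW : ∀ t, HasDerivAt W (W1 t) t := by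
    intro t
    have := ((hdY t).mul (hdz1 t)).sub ((hdY1 t).mul (hdz t))
    refine this.congr_deriv ?_
    simp only [hW1]; ring
  have hEpos : ∀ t, 0 < E t := fun t => Real.exp_pos _
  have hπω : ω * (π / ω) = π := mul_div_cancel₀ π (ne_of_gt hω)
  -- key identity at good points
  have hkey : ∀ t ∉ N, W1 t = (α t - (ω^2 + c^2/4)) * (Y t * z t) := by
    intro t ht
    have heq := (hgood t ht).1
    have hxx : x'' t = -(c * x' t) - α t * x t := by linarith
    simp only [hW1, hY, hY2, hz, hz2, hxx]
    ring
  -- x nonneg on Icc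
  have hxnn : ∀ t ∈ Icc a b, 0 ≤ x t := by
    intro t ht
    rcases eq_or_lt_of_le ht.1 with h | h
    · rw [← h, hxa]
    rcases eq_or_lt_of_le ht.2 with h2 | h2
    · rw [h2, hxb]
    · exact le_of_lt (hpos t ⟨h, h2⟩)
  have hznn : ∀ t ∈ Icc a b, 0 ≤ z t := by
    intro t ht
    apply Real.sin_nonneg_of_nonneg_of_le_pi
    · exact mul_nonneg hω.le (by linarith [ht.1])
    · calc ω * (t - a) ≤ ω * (b - a) := by
            apply mul_le_mul_of_nonneg_left (by linarith [ht.2]) (le_of_lt hω)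
        _ ≤ ω * (π / ω) := mul_le_mul_of_nonneg_left hble (le_of_lt hω)
        _ = π := hπω
  -- deriv W nonpos on Ioo
  have hcW1 : Continuous W1 := by
    simp only [hW1, hY, hY2, hz, hz2, hE]
    fun_prop
  have hW1le : ∀ t ∈ Ioo a b, W1 t ≤ 0 := by
    have hsub : Ioo a b \ N ⊆ {t | W1 t ≤ 0} := by
      intro t ⟨htI, htN⟩
      rw [Set.mem_setOf_eq, hkey t htN]
      have h1 : α t - (ω^2 + c^2/4) ≤ 0 := by linarith [(hgood t htN).2]
      have h2 : 0 ≤ Y t * z t := by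
        apply mul_nonneg
        · exact mul_nonneg (le_of_lt (hEpos t)) (hxnn t (Set.mem_Icc_of_Ioo htI))
        · exact hznn t (Set.mem_Icc_of_Ioo htI)
      exact mul_nonpos_of_nonpos_of_nonneg h1 h2
    have hcl : IsClosed {t | W1 t ≤ 0} := isClosed_le hcW1 continuous_const
    intro t ht
    exact (hcl.closure_subset_iff.mpr hsub) (dense_aux hN isOpen_Ioo ht)
  have hanti : AntitoneOn W (Icc a b) := by
    apply antitoneOn_of_deriv_nonpos (convex_Icc a b)
    · exact (continuous_iff_continuousAt.mpr fun t => (hdW t).continuousAt).continuousOn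
    · intro t ht
      exact ((hdW t).differentiableAt).differentiableWithinAt
    · intro t ht
      rw [interior_Icc] at ht
      rw [(hdW t).deriv]
      exact hW1le t ht
  have hWa : W a = 0 := by
    simp [hW, hY, hY1, hz, hz1, hxa]
  have hWb : W b = -(E b * x' b) * z b := by
    simp [hW, hY, hY1, hz, hz1, hxb]
  -- rule out strict inequality
  have heq : b - a = π / ω := by
    rcases eq_or_lt_of_le hble with h | h
    · exact h
    exfalso
    have hzb : 0 < z b := by
      apply Real.sin_pos_of_pos_of_lt_pi
      · exact mul_pos hω (sub_pos.mpr hab)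
      · calc ω * (b - a) < ω * (π / ω) := by
              apply mul_lt_mul_of_pos_left h hω
          _ = π := hπω
    have hWbpos : 0 < W b := by
      rw [hWb]
      have : 0 < E b * (-(x' b)) := mul_pos (hEpos b) (by linarith)
      nlinarith
    have := hanti (Set.left_mem_Icc.mpr (le_of_lt hab)) (Set.right_mem_Icc.mpr (le_of_lt hab)) (le_of_lt hab)
    rw [hWa] at this
    linarith
  refine ⟨le_of_eq heq.symm, fun _ t ht htN => ?_⟩
  -- equality case
  have hzb : z b = 0 := by
    simp only [hz, heq, hπω, Real.sin_pi]
  have hWb0 : W b = 0 := by rw [hWb, hzb, mul_zero]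
  have hW0 : ∀ u ∈ Icc a b, W u = 0 := by
    intro u hu
    have h1 := hanti (Set.left_mem_Icc.mpr (le_of_lt hab)) hu hu.1
    have h2 := hanti hu (Set.right_mem_Icc.mpr (le_of_lt hab)) hu.2
    rw [hWa] at h1; rw [hWb0] at h2
    linarith
  have hderiv0 : deriv W t = 0 := by
    have hev : W =ᶠ[nhds t] (fun _ => 0) := by
      have hto : Ioo a b ∈ nhds t := isOpen_Ioo.mem_nhds ht
      filter_upwards [hto] with u hu
      exact hW0 u (Set.mem_Icc_of_Ioo hu)
    rw [hev.deriv_eq]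
    simp
  have hW1t : W1 t = 0 := by rw [← (hdW t).deriv, hderiv0]
  rw [hkey t htN] at hW1t
  have hYzpos : 0 < Y t * z t := by
    apply mul_pos
    · exact mul_pos (hEpos t) (hpos t ht)
    · apply Real.sin_pos_of_pos_of_lt_pi
      · exact mul_pos hω (by linarith [ht.1])
      · calc ω * (t - a) < ω * (b - a) := by
              apply mul_lt_mul_of_pos_left (by linarith [ht.2]) hω
          _ = π := by rw [heq, hπω]
  rcases mul_eq_zero.mp hW1t with h | h
  · linarith
  · exact absurd h (ne_of_gt hYzpos)

lemma next_zero (x x' : ℝ → ℝ) (hd1 : ∀ t, HasDerivAt x (x' t) t)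
    (huniq : ∀ s, x s = 0 → x' s ≠ 0)
    (u v : ℝ) (huv : u < v) (hu : x u = 0) (hu' : 0 < x' u) (hv : x v = 0) :
    ∃ w, u < w ∧ w ≤ v ∧ x w = 0 ∧ (∀ t ∈ Ioo u w, 0 < x t) ∧ x' w < 0 := by
  have hcx : Continuous x := continuous_iff_continuousAt.mpr fun t => (hd1 t).continuousAt
  obtain ⟨u', hu'mem, hu'sub⟩ := mem_nhdsGT_iff_exists_Ioo_subset.mp
    ((ev_right (hd1 u) hu hu').1)
  set d : ℝ := min u' v with hd
  have hud : u < d := lt_min hu'mem huv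
  have hdv : d ≤ v := min_le_right _ _
  have hposd : ∀ t ∈ Ioo u d, 0 < x t := by
    intro t ht
    exact hu'sub ⟨ht.1, lt_of_lt_of_le ht.2 (min_le_left _ _)⟩
  set Z : Set ℝ := {t | t ∈ Icc d v ∧ x t = 0} with hZ
  have hZclosed : IsClosed Z := by
    have : Z = Icc d v ∩ x ⁻¹' {0} := by
      ext t; exact Iff.rfl
    rw [this]
    exact isClosed_Icc.inter (isClosed_singleton.preimage hcx)
  have hZne : Z.Nonempty := ⟨v, ⟨hdv, le_refl v⟩, hv⟩
  have hZbdd : BddBelow Z := ⟨d, fun t ht => ht.1.1⟩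
  set w : ℝ := sInf Z with hw
  have hwZ : w ∈ Z := hZclosed.csInf_mem hZne hZbdd
  have hxw : x w = 0 := hwZ.2
  have hdw : d ≤ w := hwZ.1.1
  have hwv : w ≤ v := hwZ.1.2
  have huw : u < w := lt_of_lt_of_le hud hdw
  -- no zeros in (u, w)
  have hnozero : ∀ t ∈ Ioo u w, x t ≠ 0 := by
    intro t ht htz
    rcases lt_or_ge t d with h | h
    · exact absurd htz (ne_of_gt (hposd t ⟨ht.1, h⟩))
    · have : t ∈ Z := ⟨⟨h, le_trans (le_of_lt ht.2) hwv⟩, htz⟩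
      exact absurd (csInf_le hZbdd this) (not_le.mpr ht.2)
  have hpos : ∀ t ∈ Ioo u w, 0 < x t := by
    intro t ht
    rcases lt_trichotomy (x t) 0 with h | h | h
    · exfalso
      set q : ℝ := (u + d) / 2 with hq
      have hq1 : u < q := by simp only [hq]; linarith
      have hq2 : q < d := by simp only [hq]; linarith
      have hqpos : 0 < x q := hposd q ⟨hq1, hq2⟩
      have hqt : q < t := by
        rcases lt_or_ge t d with h2 | h2
        · -- t < d means x t > 0, contradiction with h
          exact absurd (hposd t ⟨ht.1, h2⟩) (not_lt.mpr (le_of_lt h))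
        · linarith
      have : (0:ℝ) ∈ Set.Icc (x t) (x q) := ⟨le_of_lt h, le_of_lt hqpos⟩
      obtain ⟨s, hs, hs0⟩ := intermediate_value_Icc' (le_of_lt hqt) hcx.continuousOn this
      have hsu : u < s := lt_of_lt_of_le hq1 hs.1
      have hsw : s < w := lt_of_le_of_lt hs.2 ht.2
      exact hnozero s ⟨hsu, hsw⟩ hs0
    · exact absurd h (hnozero t ht)
    · exact h
  refine ⟨w, huw, hwv, hxw, hpos, ?_⟩
  rcases lt_trichotomy (x' w) 0 with h | h | h
  · exact h
  · exact absurd h (huniq w hxw)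
  · exfalso
    have hev := (ev_right (hd1 w) hxw h).2
    have hmem : Set.Ioo u w ∈ nhdsWithin w (Set.Iio w) :=
      Ioo_mem_nhdsLT_of_mem ⟨huw, le_refl w⟩
    have : ∀ᶠ t in nhdsWithin w (Set.Iio w), False := by
      filter_upwards [hev, hmem] with t h1 h2
      exact absurd (hpos t h2) (not_lt.mpr (le_of_lt h1))
    rcases this.exists with ⟨t, ht⟩
    exact ht

lemma per_measure (T : ℝ) (hT : 0 < T) (S : Set ℝ)
    (hSper : ∀ t, t ∈ S ↔ t + T ∈ S)
    (hpos : 0 < volume (S ∩ Icc 0 T)) (u : ℝ) :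
    0 < volume (S ∩ Ioo u (u + T)) := by
  by_contra h0
  push_neg at h0
  have h0 : volume (S ∩ Ioo u (u + T)) = 0 := le_antisymm h0 zero_le
  -- periodicity for integer multiples
  have hper : ∀ (k : ℤ) (t : ℝ), t ∈ S ↔ t + k * T ∈ S := by
    have base : Function.Periodic (fun t => t ∈ S) T := fun t => (propext (hSper t)).symm
    intro k t
    have := (base.int_mul k) t
    exact (Eq.to_iff this).symm
  -- each translated window is null
  have hnull : ∀ k : ℤ, volume (S ∩ Ioo (u + k * T) (u + k * T + T)) = 0 := by
    intro k
    have heq : S ∩ Ioo (u + k * T) (u + k * T + T)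
        = (fun t => t + (-(k * T))) ⁻¹' (S ∩ Ioo u (u + T)) := by
      ext t
      simp only [Set.mem_inter_iff, Set.mem_Ioo, Set.mem_preimage]
      constructor
      · rintro ⟨hts, h1, h2⟩
        refine ⟨?_, by linarith, by linarith⟩
        have h3 : t + -(k * T) + k * T = t := by ring
        exact (hper k (t + -(k * T))).mpr (by rw [h3]; exact hts)
      · rintro ⟨hts, h1, h2⟩
        refine ⟨?_, by linarith, by linarith⟩
        have := (hper k (t + -(k * T))).mp hts
        have h3 : t + -(k * T) + k * T = t := by ring
        rwa [h3] at this
    rw [heq, measure_preimage_add_right volume _ _, h0]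
  -- the translated windows together with countably many points cover ℝ
  have hcover : S ⊆ (⋃ k : ℤ, S ∩ Ioo (u + k * T) (u + k * T + T)) ∪ (⋃ k : ℤ, {u + k * T}) := by
    intro t ht
    set k : ℤ := ⌊(t - u) / T⌋ with hk
    have h1 : (k : ℝ) ≤ (t - u) / T := Int.floor_le _
    have h2 : (t - u) / T < k + 1 := Int.lt_floor_add_one _
    have h3 : (k : ℝ) * T ≤ t - u := by
      calc (k : ℝ) * T ≤ ((t - u) / T) * T := by
            apply mul_le_mul_of_nonneg_right h1 (le_of_lt hT)
        _ = t - u := by field_simp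
    have h4 : t - u < (k + 1) * T := by
      calc t - u = ((t - u) / T) * T := by field_simp
        _ < (k + 1) * T := by apply mul_lt_mul_of_pos_right h2 hT
    rcases eq_or_lt_of_le h3 with he | hlt
    · right
      apply Set.mem_iUnion.mpr
      exact ⟨k, by simp; linarith⟩
    · left
      apply Set.mem_iUnion.mpr
      exact ⟨k, ht, by linarith, by linarith⟩
  have hS0 : volume S = 0 := by
    have h1 : volume ((⋃ k : ℤ, S ∩ Ioo (u + k * T) (u + k * T + T)) ∪ (⋃ k : ℤ, {u + k * T})) = 0 := by
      apply measure_union_null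
      · exact measure_iUnion_null hnull
      · exact measure_iUnion_null fun k => measure_singleton _
    exact le_antisymm (h1 ▸ measure_mono hcover) zero_le
  have : volume (S ∩ Icc 0 T) = 0 :=
    le_antisymm (hS0 ▸ measure_mono Set.inter_subset_left) zero_le
  rw [this] at hpos
  exact lt_irrefl 0 hpos

lemma main_work (c T : ℝ) (hT : 0 < T) (α x x' x'' : ℝ → ℝ)
    (hd1 : ∀ t, HasDerivAt x (x' t) t) (hd2 : ∀ t, HasDerivAt x' (x'' t) t)
    (hc2 : Continuous x'') {N : Set ℝ} (hN : volume N = 0)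
    (hgood : ∀ t ∉ N, x'' t + c * x' t + α t * x t = 0 ∧ α t ≤ (2 * π) ^ 2 / T ^ 2 + c ^ 2 / 4)
    (hxper : ∀ t, x (t + T) = x t)
    (huniq : ∀ s, x s = 0 → x' s ≠ 0)
    (t0 : ℝ) (ht0 : x t0 = 0) (ht0' : 0 < x' t0)
    (hS : 0 < volume ({t | α t < (2 * π) ^ 2 / T ^ 2 + c ^ 2 / 4} ∩ Ioo t0 (t0 + T))) :
    False := by
  have hπ : 0 < π := Real.pi_pos
  set ω : ℝ := 2 * π / T with hω
  have hωpos : 0 < ω := by positivity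
  have hm : ω ^ 2 + c ^ 2 / 4 = (2 * π) ^ 2 / T ^ 2 + c ^ 2 / 4 := by
    rw [hω, div_pow]
  have hπω : π / ω = T / 2 := by
    rw [hω]
    field_simp
  -- x' is periodic
  have hx'per : ∀ t, x' (t + T) = x' t := by
    intro t
    have h1 : HasDerivAt (fun s => x (s + T)) (x' (t + T) * 1) t :=
      (hd1 (t + T)).comp t ((hasDerivAt_id t).add_const T)
    have h2 : (fun s => x (s + T)) = x := funext hxper
    rw [h2] at h1
    have := h1.unique (hd1 t)
    linarith
  have hgood' : ∀ t ∉ N, x'' t + c * x' t + α t * x t = 0 ∧ α t ≤ ω ^ 2 + c ^ 2 / 4 := by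
    intro t ht
    exact ⟨(hgood t ht).1, hm ▸ (hgood t ht).2⟩
  have hT0 : x (t0 + T) = 0 := by rw [hxper t0]; exact ht0
  -- first zero t1
  obtain ⟨t1, ht01, h1T, hx1, hpos1, hx1'⟩ :=
    next_zero x x' hd1 huniq t0 (t0 + T) (by linarith) ht0 ht0' hT0
  -- t1 < t0 + T
  have h1T' : t1 < t0 + T := by
    rcases eq_or_lt_of_le h1T with h | h
    · exfalso
      rw [h] at hx1'
      rw [hx'per t0] at hx1'
      linarith
    · exact h
  -- second zero t2 (for -x)
  have hd1neg : ∀ t, HasDerivAt (fun t => -x t) (-x' t) t := fun t => (hd1 t).neg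
  have huniqneg : ∀ s, -x s = 0 → -x' s ≠ 0 := by
    intro s hs h
    exact huniq s (neg_eq_zero.mp hs) (neg_eq_zero.mp h)
  obtain ⟨t2, ht12, h2T, hx2, hpos2, hx2'⟩ :=
    next_zero (fun t => -x t) (fun t => -x' t) hd1neg huniqneg t1 (t0 + T) h1T'
      (by simp [hx1]) (by simp; linarith) (by simp [hT0])
  -- Sturm on [t0, t1]
  obtain ⟨hge1, heq1⟩ := sturm_aux c ω hωpos α x x' x'' hd1 hd2 hc2 hN hgood'
    t0 t1 ht01 ht0 hx1 hpos1 hx1'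
  -- Sturm on [t1, t2] for -x
  have hd2neg : ∀ t, HasDerivAt (fun t => -x' t) (-x'' t) t := fun t => (hd2 t).neg
  have hgoodneg : ∀ t ∉ N, -x'' t + c * (-x' t) + α t * (-x t) = 0 ∧ α t ≤ ω ^ 2 + c ^ 2 / 4 := by
    intro t ht
    exact ⟨by linarith [(hgood' t ht).1], (hgood' t ht).2⟩
  obtain ⟨hge2, heq2⟩ := sturm_aux c ω hωpos α (fun t => -x t) (fun t => -x' t)
    (fun t => -x'' t) hd1neg hd2neg hc2.neg hN hgoodneg t1 t2 ht12
    (by simp [hx1]) hx2 hpos2 hx2'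
  rw [hπω] at hge1 hge2
  -- forces equality
  have he1 : t1 - t0 = T / 2 := by linarith
  have he2 : t2 - t1 = T / 2 := by linarith
  have he3 : t2 = t0 + T := by linarith
  have hae1 := heq1 (by rw [hπω]; linarith)
  have hae2 := heq2 (by rw [hπω]; linarith)
  -- the strict set is contained in N ∪ {t1}
  have hsub : {t | α t < (2 * π) ^ 2 / T ^ 2 + c ^ 2 / 4} ∩ Ioo t0 (t0 + T) ⊆ N ∪ {t1} := by
    intro t ⟨htα, htI⟩
    by_contra ht
    rw [Set.mem_union] at ht
    push_neg at ht
    obtain ⟨htN, ht1⟩ := ht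
    rw [Set.mem_singleton_iff] at ht1
    rcases lt_trichotomy t t1 with h | h | h
    · have := hae1 t ⟨htI.1, h⟩ htN
      rw [hm] at this
      exact absurd this (ne_of_lt htα)
    · exact ht1 h
    · have := hae2 t ⟨h, by rw [he3]; exact htI.2⟩ htN
      rw [hm] at this
      exact absurd this (ne_of_lt htα)
  have : volume ({t | α t < (2 * π) ^ 2 / T ^ 2 + c ^ 2 / 4} ∩ Ioo t0 (t0 + T)) = 0 := by
    have h1 : volume (N ∪ {t1}) = 0 :=
      measure_union_null hN (measure_singleton t1)
    exact le_antisymm (h1 ▸ measure_mono hsub) zero_le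
  rw [this] at hS
  exact lt_irrefl 0 hS

/-- Under the bound `α ≪ (2π)²/T² + c²/4`, any `T`-periodic solution of
`x'' + c x' + α x = 0` is either trivial or nowhere vanishing. -/
theorem stmt4 (c T : ℝ) (hT : 0 < T) (α : ℝ → ℝ) (hmeas : Measurable α)
    (hper : Function.Periodic α T)
    (hbdd : ∃ C : ℝ, ∀ᵐ t ∂(volume : Measure ℝ), |α t| ≤ C)
    (hub : ∀ᵐ t ∂(volume : Measure ℝ), α t ≤ (2 * π) ^ 2 / T ^ 2 + c ^ 2 / 4)
    (hstrict : 0 < volume {t ∈ Icc (0 : ℝ) T | α t < (2 * π) ^ 2 / T ^ 2 + c ^ 2 / 4})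
    (x : ℝ → ℝ) (hx : ContDiff ℝ 2 x) (hxper : Function.Periodic x T)
    (hode : ∀ᵐ t ∂(volume : Measure ℝ),
      deriv (deriv x) t + c * deriv x t + α t * x t = 0) :
    (∀ t, x t = 0) ∨ (∀ t, x t ≠ 0) := by
  obtain ⟨C, hC⟩ := hbdd
  -- regularity of x
  have hx2 : ContDiff ℝ ((1 : ℕ) + 1) x := by exact_mod_cast hx
  have hdiff : Differentiable ℝ x := hx.differentiable two_ne_zero
  have hx' : ContDiff ℝ 1 (deriv x) := by
    have := (contDiff_succ_iff_deriv.mp hx2).2.2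
    exact_mod_cast this
  have hdiff' : Differentiable ℝ (deriv x) := (contDiff_one_iff_deriv.mp hx').1
  have hc2 : Continuous (deriv (deriv x)) := (contDiff_one_iff_deriv.mp hx').2
  set x' : ℝ → ℝ := deriv x with hxd
  set x'' : ℝ → ℝ := deriv (deriv x) with hxdd
  have hd1 : ∀ t, HasDerivAt x (x' t) t := fun t => (hdiff t).hasDerivAt
  have hd2 : ∀ t, HasDerivAt x' (x'' t) t := fun t => (hdiff' t).hasDerivAt
  -- the null set
  set m' : ℝ := (2 * π) ^ 2 / T ^ 2 + c ^ 2 / 4 with hm'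
  set N : Set ℝ :=
    {t | ¬(x'' t + c * x' t + α t * x t = 0 ∧ α t ≤ m' ∧ |α t| ≤ C)} with hNdef
  have hN : volume N = 0 := by
    have h : ∀ᵐ t ∂(volume : Measure ℝ),
        x'' t + c * x' t + α t * x t = 0 ∧ α t ≤ m' ∧ |α t| ≤ C := by
      filter_upwards [hode, hub, hC] with t h1 h2 h3
      exact ⟨h1, h2, h3⟩
    exact ae_iff.mp h
  have hgood : ∀ t ∉ N, x'' t + c * x' t + α t * x t = 0 ∧ α t ≤ m' ∧ |α t| ≤ C := by
    intro t ht
    by_contra h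
    exact ht h
  rcases Classical.em (∃ t0, x t0 = 0) with ⟨t0, ht0⟩ | hnz
  · left
    by_contra hne
    push_neg at hne
    obtain ⟨s, hs⟩ := hne
    -- zeros of x are simple
    have huniq : ∀ u, x u = 0 → x' u ≠ 0 := by
      intro u hu hu'
      have := uniq_aux c C α x x' x'' hd1 hd2 hc2 hN
        (fun t ht => ⟨(hgood t ht).1, (hgood t ht).2.2⟩) u hu hu'
      exact hs (this s)
    -- positive measure of strict set in every window
    have hSmem : ∀ u : ℝ,
        0 < volume ({t | α t < m'} ∩ Ioo u (u + T)) := by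
      intro u
      apply per_measure T hT _ ?_ ?_ u
      · intro t
        simp only [Set.mem_setOf_eq, hper t]
      · have : {t | α t < m'} ∩ Icc 0 T = {t ∈ Icc (0:ℝ) T | α t < m'} := by
          ext t
          simp only [Set.mem_inter_iff, Set.mem_setOf_eq, Set.mem_sep_iff]
          tauto
        rw [this]
        exact hstrict
    have ht0' : x' t0 ≠ 0 := huniq t0 ht0
    rcases lt_or_gt_of_ne ht0' with hneg | hpos
    · -- use -x
      have hd1n : ∀ t, HasDerivAt (fun t => -x t) (-x' t) t := fun t => (hd1 t).neg
      have hd2n : ∀ t, HasDerivAt (fun t => -x' t) (-x'' t) t := fun t => (hd2 t).neg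
      exact main_work c T hT α (fun t => -x t) (fun t => -x' t) (fun t => -x'' t)
        hd1n hd2n hc2.neg hN
        (by
          intro t ht
          refine ⟨?_, (hgood t ht).2.1⟩
          have h1 := (hgood t ht).1
          linarith)
        (fun t => by simp [hxper t])
        (fun u hu hu' => huniq u (neg_eq_zero.mp hu) (neg_eq_zero.mp hu'))
        t0 (by simp [ht0]) (by simp; linarith) (hSmem t0)
    · exact main_work c T hT α x x' x'' hd1 hd2 hc2 hN
        (fun t ht => ⟨(hgood t ht).1, (hgood t ht).2.1⟩)
        (fun t => hxper t) huniq t0 ht0 hpos (hSmem t0)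
  · right
    push_neg at hnz
    exact hnz
end

section
/- Let c ∈ ℝ, T > 0, and let α₁, α₂ be T-periodic essentially bounded functions with α₁ ≪ α₂ ≪ (2π)²/T² + c²/4 (pointwise a.e. inequality, strict on a positive-measure set). Then the equations x'' + c x' + α₁(t)x = 0 and x'' + c x' + α₂(t)x = 0 cannot both admit nontrivial T-periodic solutions. -/
open Real MeasureTheory Set Filter

/-- a.e. inequality between continuous functions on an open set holds everywhere. -/
lemma SZ.ae_imp_le {f g : ℝ → ℝ} (hf : Continuous f) (hg : Continuous g)
    {s : Set ℝ} (hs : IsOpen s) (h : ∀ᵐ t ∂(volume : Measure ℝ), t ∈ s → f t ≤ g t) :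
    ∀ t ∈ s, f t ≤ g t := by
  by_contra hc
  push_neg at hc
  obtain ⟨t, hts, hlt⟩ := hc
  have hopen : IsOpen (s ∩ {u | g u < f u}) := hs.inter (isOpen_lt hg hf)
  have hpos := hopen.measure_pos volume ⟨t, hts, hlt⟩
  have hnull : volume (s ∩ {u | g u < f u}) = 0 := by
    refine measure_mono_null ?_ (ae_iff.mp h)
    rintro u ⟨hus, hu⟩
    simp only [Set.mem_setOf_eq, Classical.not_imp, not_le]
    exact ⟨hus, hu⟩
  exact absurd hnull hpos.ne'

lemma SZ.deriv2 {x : ℝ → ℝ} (hx : ContDiff ℝ 2 x) :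
    Differentiable ℝ x ∧ Differentiable ℝ (deriv x) ∧ Continuous (deriv (deriv x)) := by
  have h2 : ContDiff ℝ ((1:WithTop ℕ∞)+1) x := by norm_num [hx]
  obtain ⟨hd, -, h1⟩ := contDiff_succ_iff_deriv.mp h2
  have h1' : ContDiff ℝ ((0:WithTop ℕ∞)+1) (deriv x) := by norm_num [h1]
  obtain ⟨hd2, -, h0⟩ := contDiff_succ_iff_deriv.mp h1'
  exact ⟨hd, hd2, h0.continuous⟩

lemma SZ.periodic_deriv {x : ℝ → ℝ} {T : ℝ} (hper : Function.Periodic x T) :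
    Function.Periodic (deriv x) T := by
  intro t
  have : (fun s => x (s + T)) = x := funext fun s => hper s
  calc deriv x (t + T) = deriv (fun s => x (s + T)) t := (deriv_comp_add_const x T t).symm
    _ = deriv x t := by rw [this]

/-- Uniqueness: a solution of `x'' + c x' + α x = 0` (a.e., bounded `α`) vanishing to
first order at a point vanishes identically. -/
lemma SZ.unique {c : ℝ} {α : ℝ → ℝ} {Cα : ℝ} (hbdd : ∀ᵐ t ∂(volume : Measure ℝ), |α t| ≤ Cα)
    {x : ℝ → ℝ} (hx : ContDiff ℝ 2 x)
    (hode : ∀ᵐ t ∂(volume : Measure ℝ), deriv (deriv x) t + c * deriv x t + α t * x t = 0)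
    {t₀ : ℝ} (h0 : x t₀ = 0) (h0' : deriv x t₀ = 0) : ∀ t, x t = 0 := by
  obtain ⟨hd1, hd2, hc2⟩ := SZ.deriv2 hx
  have cx : Continuous x := hx.continuous
  have cdx : Continuous (deriv x) := hd2.continuous
  set K : ℝ := 1 + max Cα 0 + 2 * |c| with hK
  set g : ℝ → ℝ := fun t => x t ^ 2 + deriv x t ^ 2 with hgdef
  have hgd : ∀ t, HasDerivAt g
      (2 * x t * deriv x t + 2 * deriv x t * deriv (deriv x) t) t := by
    intro t
    have h1 : HasDerivAt (fun s => x s ^ 2) (2 * x t * deriv x t) t := by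
      simpa [mul_comm, mul_assoc] using ((hd1 t).hasDerivAt.fun_pow 2)
    have h2 : HasDerivAt (fun s => deriv x s ^ 2) (2 * deriv x t * deriv (deriv x) t) t := by
      simpa [mul_comm, mul_assoc] using ((hd2 t).hasDerivAt.fun_pow 2)
    exact h1.add h2
  have hgderiv : ∀ t, deriv g t = 2 * x t * deriv x t + 2 * deriv x t * deriv (deriv x) t :=
    fun t => (hgd t).deriv
  have hgcont : Continuous fun t => deriv g t := by
    simp only [hgderiv]; fun_prop
  have hgc : Continuous g := by fun_prop
  have hgnonneg : ∀ t, 0 ≤ g t := fun t => by positivity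
  -- a.e. bound |g'| ≤ K g, upgraded to everywhere
  have haebound : ∀ᵐ t ∂(volume : Measure ℝ), |deriv g t| ≤ K * g t := by
    filter_upwards [hbdd, hode] with t hα hο
    have hxx : deriv (deriv x) t = -(c * deriv x t + α t * x t) := by linarith
    have hab : |2 * x t * deriv x t| ≤ x t ^ 2 + deriv x t ^ 2 := by
      rw [abs_le]
      constructor <;> nlinarith [sq_nonneg (x t + deriv x t), sq_nonneg (x t - deriv x t)]
    have hb2 : deriv x t ^ 2 ≤ x t ^ 2 + deriv x t ^ 2 := by nlinarith [sq_nonneg (x t)]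
    have hM : |α t| ≤ max Cα 0 := hα.trans (le_max_left _ _)
    have e : 2 * x t * deriv x t + 2 * deriv x t * -(c * deriv x t + α t * x t)
        = 2 * x t * deriv x t + (-(2*c)) * deriv x t ^ 2 + (-(α t)) * (2 * x t * deriv x t) := by
      ring
    rw [hgderiv, hxx, e]
    have habs := abs_add_three (2 * x t * deriv x t) ((-(2*c)) * deriv x t ^ 2)
        ((-(α t)) * (2 * x t * deriv x t))
    refine habs.trans ?_
    rw [abs_mul (-(2*c)) (deriv x t ^ 2), abs_mul (-(α t)) (2 * x t * deriv x t), abs_neg (2*c), abs_neg (α t)]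
    have h2 : |2*c| * deriv x t ^ 2 ≤ 2 * |c| * (x t ^ 2 + deriv x t ^ 2) := by
      rw [show |2*c| = 2*|c| by rw [abs_mul]; norm_num]
      have : (0:ℝ) ≤ 2 * |c| := by positivity
      exact mul_le_mul_of_nonneg_left hb2 this
    have h3 : |α t| * |2 * x t * deriv x t| ≤ (max Cα 0) * (x t ^ 2 + deriv x t ^ 2) :=
      mul_le_mul hM hab (abs_nonneg _) (le_trans (abs_nonneg (α t)) hM)
    have habs2 : |deriv x t ^ 2| = deriv x t ^ 2 := abs_of_nonneg (by positivity)
    rw [habs2]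
    simp only [hK, hgdef]
    nlinarith [hab]
  have hbound : ∀ t, |deriv g t| ≤ K * g t := by
    have := SZ.ae_imp_le (f := fun t => |deriv g t|) (g := fun t => K * g t)
      (continuous_abs.comp hgcont) (by fun_prop) isOpen_univ
      (by filter_upwards [haebound] with t h _; exact h)
    exact fun t => this t (mem_univ t)
  -- forward decay of e^{-Kt} g
  have hgzero : ∀ t, g t = 0 := by
    intro t
    rcases le_or_gt t₀ t with hle | hlt
    · have hF : ∀ s, HasDerivAt (fun u => Real.exp (-K * u) * g u)
          (Real.exp (-K * s) * (-K) * g s + Real.exp (-K * s) * deriv g s) s := by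
        intro s
        have he : HasDerivAt (fun u => Real.exp (-K * u)) (Real.exp (-K * s) * (-K)) s := by
          simpa using (((hasDerivAt_id s).const_mul (-K)).exp)
        have := he.mul (hgd s)
        rw [hgderiv s]
        exact this
      have hanti : Antitone (fun u => Real.exp (-K * u) * g u) := by
        apply antitone_of_deriv_nonpos
        · exact fun s => (hF s).differentiableAt
        · intro s
          rw [(hF s).deriv]
          have h1 := (abs_le.mp (hbound s)).2
          have h2 : (0:ℝ) < Real.exp (-K * s) := Real.exp_pos _
          nlinarith
      have h1 : Real.exp (-K * t) * g t ≤ Real.exp (-K * t₀) * g t₀ := hanti hle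
      have h2 : g t₀ = 0 := by simp [hgdef, h0, h0']
      rw [h2, mul_zero] at h1
      have h3 : (0:ℝ) < Real.exp (-K * t) := Real.exp_pos _
      nlinarith [hgnonneg t]
    · have hF : ∀ s, HasDerivAt (fun u => Real.exp (K * u) * g u)
          (Real.exp (K * s) * K * g s + Real.exp (K * s) * deriv g s) s := by
        intro s
        have he : HasDerivAt (fun u => Real.exp (K * u)) (Real.exp (K * s) * K) s := by
          simpa using (((hasDerivAt_id s).const_mul K).exp)
        have := he.mul (hgd s)
        rw [hgderiv s]
        exact this
      have hmono : Monotone (fun u => Real.exp (K * u) * g u) := by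
        apply monotone_of_deriv_nonneg
        · exact fun s => (hF s).differentiableAt
        · intro s
          rw [(hF s).deriv]
          have h1 := (abs_le.mp (hbound s)).1
          have h2 : (0:ℝ) < Real.exp (K * s) := Real.exp_pos _
          nlinarith
      have h1 : Real.exp (K * t) * g t ≤ Real.exp (K * t₀) * g t₀ := hmono hlt.le
      have h2 : g t₀ = 0 := by simp [hgdef, h0, h0']
      rw [h2, mul_zero] at h1
      have h3 : (0:ℝ) < Real.exp (K * t) := Real.exp_pos _
      nlinarith [hgnonneg t]
  intro t
  have := hgzero t
  simp only [hgdef] at this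
  have hx2 : x t ^ 2 = 0 := by nlinarith [sq_nonneg (x t), sq_nonneg (deriv x t)]
  exact pow_eq_zero_iff two_ne_zero |>.mp hx2

lemma SZ.slope_pos {y : ℝ → ℝ} {b d : ℝ} (h : HasDerivAt y d b) (h0 : y b = 0) (hd : d ≠ 0) :
    ∀ᶠ t in nhdsWithin b {b}ᶜ, 0 < (y t / (t - b)) * d := by
  have h' := hasDerivAt_iff_tendsto_slope.mp h
  have hball : Metric.ball d |d| ∈ nhds d := Metric.ball_mem_nhds d (abs_pos.mpr hd)
  filter_upwards [h'.eventually_mem hball, self_mem_nhdsWithin] with t ht ht'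
  rw [Metric.mem_ball, Real.dist_eq] at ht
  have hs : slope y b t = y t / (t - b) := by
    rw [slope_def_field, h0, sub_zero]
  rw [hs] at ht
  have h2 : |(y t / (t - b) - d) * d| < |d| * |d| := by
    rw [abs_mul]
    exact mul_lt_mul_of_pos_right ht (abs_pos.mpr hd)
  have h3 := neg_abs_le ((y t / (t - b) - d) * d)
  have h4 : |d| * |d| = d * d := by rw [← abs_mul, abs_mul_self]
  nlinarith

/-- Sturm gap lemma: consecutive zeros of a solution of `y'' + q y = 0` with
`q ≤ (2π/T)²` are at distance ≥ `T/2`, with a.e. equality of `q` in the equality case. -/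
lemma SZ.gap {T : ℝ} (hT : 0 < T) {q : ℝ → ℝ} {Cq : ℝ}
    (hbdd : ∀ᵐ t ∂(volume : Measure ℝ), |q t| ≤ Cq)
    (hq : ∀ᵐ t ∂(volume : Measure ℝ), q t ≤ (2*π/T)^2)
    {y : ℝ → ℝ} (hy : ContDiff ℝ 2 y)
    (hode : ∀ᵐ t ∂(volume : Measure ℝ), deriv (deriv y) t + q t * y t = 0)
    {a b : ℝ} (hab : a < b) (ha : y a = 0) (hb : y b = 0)
    (hpos : ∀ t ∈ Ioo a b, 0 < y t) :
    T/2 ≤ b - a ∧ (b - a = T/2 → ∀ᵐ t ∂(volume : Measure ℝ), t ∈ Ioo a b → q t = (2*π/T)^2) := by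
  obtain ⟨hd1, hd2, hc2⟩ := SZ.deriv2 hy
  have cy : Continuous y := hy.continuous
  have cdy : Continuous (deriv y) := hd2.continuous
  have hode0 : ∀ᵐ t ∂(volume : Measure ℝ),
      deriv (deriv y) t + 0 * deriv y t + q t * y t = 0 := by
    filter_upwards [hode] with t h; linarith
  have hπT : 0 < 2*π/T := by positivity
  set Q : ℝ := (2*π/T)^2 with hQdef
  set z : ℝ → ℝ := fun t => Real.sin (2*π/T*(t-a)) with hzdef
  set z' : ℝ → ℝ := fun t => 2*π/T * Real.cos (2*π/T*(t-a)) with hz'def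
  have hin : ∀ t : ℝ, HasDerivAt (fun s : ℝ => 2*π/T*(s-a)) (2*π/T) t := by
    intro t
    simpa using ((hasDerivAt_id t).sub_const a).const_mul (2*π/T)
  have hzd : ∀ t, HasDerivAt z (z' t) t := by
    intro t
    simpa [hzdef, hz'def, mul_comm, Function.comp_def] using (Real.hasDerivAt_sin (2*π/T*(t-a))).comp t (hin t)
  have hz'd : ∀ t, HasDerivAt z' (-(Q * z t)) t := by
    intro t
    have h1 := ((Real.hasDerivAt_cos (2*π/T*(t-a))).comp t (hin t)).const_mul (2*π/T)
    exact h1.congr_deriv (by simp only [hQdef, hzdef]; ring)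
  have cz : Continuous z := by
    simp only [hzdef]; fun_prop
  have cz' : Continuous z' := by
    simp only [hz'def]; fun_prop
  set W : ℝ → ℝ := fun t => z t * deriv y t - z' t * y t with hWdef
  have hWd : ∀ t, HasDerivAt W (z t * deriv (deriv y) t + Q * (z t * y t)) t := by
    intro t
    have h1 := (hzd t).mul (hd2 t).hasDerivAt
    have h2 := (hz'd t).mul (hd1 t).hasDerivAt
    have h3 := h1.sub h2
    exact h3.congr_deriv (by ring)
  have hWderiv : ∀ t, deriv W t = z t * deriv (deriv y) t + Q * (z t * y t) :=
    fun t => (hWd t).deriv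
  have hWdcont : Continuous (fun t => deriv W t) := by
    simp only [hWderiv]; fun_prop
  have hWa : W a = 0 := by
    simp [hWdef, hzdef, ha]
  -- positivity of z inside
  have hzpos : ∀ t, a < t → t < a + T/2 → 0 < z t := by
    intro t h1 h2
    apply Real.sin_pos_of_pos_of_lt_pi
    · have : 0 < t - a := by linarith
      positivity
    · have h3 : t - a < T/2 := by linarith
      calc 2*π/T*(t-a) < 2*π/T*(T/2) := by
            exact mul_lt_mul_of_pos_left h3 hπT
        _ = π := by field_simp
  -- monotonicity of W on [a,b] provided b ≤ a + T/2
  have hmono : b ≤ a + T/2 → MonotoneOn W (Icc a b) := by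
    intro hble
    apply monotoneOn_of_deriv_nonneg (convex_Icc a b) (cz.mul cdy |>.sub (cz'.mul cy)).continuousOn
    · intro t _
      exact (hWd t).differentiableAt.differentiableWithinAt
    · rw [interior_Icc]
      have haeW : ∀ᵐ t ∂(volume : Measure ℝ), t ∈ Ioo a b → (0:ℝ) ≤ deriv W t := by
        filter_upwards [hode, hq] with t h1 h2 ht
        have hy'' : deriv (deriv y) t = -(q t * y t) := by linarith
        rw [hWderiv, hy'']
        have hz0 : 0 < z t := hzpos t ht.1 (lt_of_lt_of_le ht.2 hble)
        have hy0 : 0 < y t := hpos t ht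
        have : z t * -(q t * y t) + Q * (z t * y t) = (Q - q t) * (z t * y t) := by ring
        rw [this]
        exact mul_nonneg (by linarith) (by positivity)
      have := SZ.ae_imp_le (f := fun _ => (0:ℝ)) (g := fun t => deriv W t)
        continuous_const hWdcont isOpen_Ioo haeW
      exact fun t ht => this t ht
  -- y' b ≠ 0
  have hy'b : deriv y b ≠ 0 := by
    intro h0
    have := SZ.unique (c := 0) hbdd hy hode0 hb h0
    have hmid : y ((a+b)/2) = 0 := this _
    have : 0 < y ((a+b)/2) := hpos _ ⟨by linarith, by linarith⟩
    linarith
  -- y' b < 0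
  have hy'bneg : deriv y b < 0 := by
    have hev := SZ.slope_pos (hd1 b).hasDerivAt hb hy'b
    have hIoo : Ioo a b ∈ nhdsWithin b (Iio b) := Ioo_mem_nhdsLT_of_mem ⟨hab, le_refl b⟩
    have hev' : ∀ᶠ t in nhdsWithin b (Iio b), 0 < (y t / (t - b)) * deriv y b :=
      hev.filter_mono (nhdsWithin_mono b (fun t ht => ne_of_lt ht))
    obtain ⟨t, ht1, ht2⟩ := (hev'.and hIoo).exists
    have hyt : 0 < y t := hpos t ht2
    have hs : y t / (t - b) < 0 := div_neg_of_pos_of_neg hyt (by linarith [ht2.2])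
    by_contra hge
    push_neg at hge
    have : (y t / (t - b)) * deriv y b ≤ 0 :=
      mul_nonpos_of_nonpos_of_nonneg hs.le (lt_of_le_of_ne hge (Ne.symm hy'b)).le
    linarith
  -- first conclusion
  have hgap : T/2 ≤ b - a := by
    by_contra hlt
    push_neg at hlt
    have hble : b ≤ a + T/2 := by linarith
    have hm := hmono hble
    have hzb : 0 < z b := hzpos b hab (by linarith)
    have hWb : W b < 0 := by
      have : W b = z b * deriv y b := by simp [hWdef, hb]
      rw [this]
      exact mul_neg_of_pos_of_neg hzb hy'bneg
    have : W a ≤ W b := hm (left_mem_Icc.mpr hab.le) (right_mem_Icc.mpr hab.le) hab.le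
    rw [hWa] at this
    linarith
  refine ⟨hgap, ?_⟩
  -- equality case
  intro heq
  have hble : b ≤ a + T/2 := by linarith
  have hm := hmono hble
  have hWb : W b = 0 := by
    have hzb : z b = 0 := by
      simp only [hzdef]
      have : 2*π/T*(b-a) = π := by rw [heq]; field_simp
      rw [this, Real.sin_pi]
    simp [hWdef, hb, hzb]
  have hWzero : ∀ t ∈ Icc a b, W t = 0 := by
    intro t ht
    have h1 : W a ≤ W t := hm (left_mem_Icc.mpr hab.le) ht ht.1
    have h2 : W t ≤ W b := hm ht (right_mem_Icc.mpr hab.le) ht.2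
    rw [hWa] at h1; rw [hWb] at h2
    linarith
  have hWderiv0 : ∀ t ∈ Ioo a b, deriv W t = 0 := by
    intro t ht
    have hev : W =ᶠ[nhds t] (fun _ => (0:ℝ)) := by
      filter_upwards [isOpen_Ioo.mem_nhds ht] with s hs
      exact hWzero s (Ioo_subset_Icc_self hs)
    rw [hev.deriv_eq, deriv_const]
  filter_upwards [hode] with t h1
  intro ht
  have h2 : z t * deriv (deriv y) t + Q * (z t * y t) = 0 := by
    rw [← hWderiv t]; exact hWderiv0 t ht
  have hy'' : deriv (deriv y) t = -(q t * y t) := by linarith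
  rw [hy''] at h2
  have h3 : (Q - q t) * (z t * y t) = 0 := by linarith [h2]
  have hz0 : 0 < z t := hzpos t ht.1 (by linarith [ht.2])
  have hy0 : 0 < y t := hpos t ht
  have h4 : z t * y t ≠ 0 := by positivity
  have h5 : Q - q t = 0 := by
    rcases mul_eq_zero.mp h3 with h | h
    · exact h
    · exact absurd h h4
  linarith

lemma SZ.neg_ode {c : ℝ} {q : ℝ → ℝ} {y : ℝ → ℝ} (hy : ContDiff ℝ 2 y)
    (hode : ∀ᵐ t ∂(volume : Measure ℝ), deriv (deriv y) t + c * deriv y t + q t * y t = 0) :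
    ∀ᵐ t ∂(volume : Measure ℝ),
      deriv (deriv (fun s => -y s)) t + c * deriv (fun s => -y s) t + q t * (-y t) = 0 := by
  have hnegd : deriv (fun s => -y s) = fun s => -(deriv y s) := funext fun s => deriv.neg
  have hnegd2 : ∀ t, deriv (deriv (fun s => -y s)) t = -(deriv (deriv y) t) := by
    intro t
    rw [hnegd]
    exact deriv.neg
  filter_upwards [hode] with t h
  rw [hnegd2, hnegd]
  simp only
  linarith

/-- Gap lemma for a solution which is merely nonvanishing between its two zeros. -/
lemma SZ.gap' {T : ℝ} (hT : 0 < T) {q : ℝ → ℝ} {Cq : ℝ}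
    (hbdd : ∀ᵐ t ∂(volume : Measure ℝ), |q t| ≤ Cq)
    (hq : ∀ᵐ t ∂(volume : Measure ℝ), q t ≤ (2*π/T)^2)
    {y : ℝ → ℝ} (hy : ContDiff ℝ 2 y)
    (hode : ∀ᵐ t ∂(volume : Measure ℝ), deriv (deriv y) t + q t * y t = 0)
    {a b : ℝ} (hab : a < b) (ha : y a = 0) (hb : y b = 0)
    (hne : ∀ t ∈ Ioo a b, y t ≠ 0) :
    T/2 ≤ b - a ∧ (b - a = T/2 → ∀ᵐ t ∂(volume : Measure ℝ), t ∈ Ioo a b → q t = (2*π/T)^2) := by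
  have cy : Continuous y := hy.continuous
  have hm : (a+b)/2 ∈ Ioo a b := ⟨by linarith, by linarith⟩
  have hsign : (∀ t ∈ Ioo a b, 0 < y t) ∨ (∀ t ∈ Ioo a b, y t < 0) := by
    rcases (hne _ hm).lt_or_gt with hneg | hpos
    · right
      intro t ht
      rcases (hne t ht).lt_or_gt with h | h
      · exact h
      · exfalso
        rcases lt_trichotomy t ((a+b)/2) with htm | htm | htm
        · have h0 : (0:ℝ) ∈ Ioo (y ((a+b)/2)) (y t) := ⟨hneg, h⟩
          obtain ⟨s, hs, hys⟩ := intermediate_value_Ioo' htm.le cy.continuousOn h0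
          exact hne s ⟨lt_trans ht.1 hs.1, lt_trans hs.2 hm.2⟩ hys
        · rw [htm] at h; linarith
        · have h0 : (0:ℝ) ∈ Ioo (y ((a+b)/2)) (y t) := ⟨hneg, h⟩
          obtain ⟨s, hs, hys⟩ := intermediate_value_Ioo htm.le cy.continuousOn h0
          exact hne s ⟨lt_trans hm.1 hs.1, lt_trans hs.2 ht.2⟩ hys
    · left
      intro t ht
      rcases (hne t ht).lt_or_gt with h | h
      · exfalso
        rcases lt_trichotomy t ((a+b)/2) with htm | htm | htm
        · have h0 : (0:ℝ) ∈ Ioo (y t) (y ((a+b)/2)) := ⟨h, hpos⟩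
          obtain ⟨s, hs, hys⟩ := intermediate_value_Ioo htm.le cy.continuousOn h0
          exact hne s ⟨lt_trans ht.1 hs.1, lt_trans hs.2 hm.2⟩ hys
        · rw [htm] at h; linarith
        · have h0 : (0:ℝ) ∈ Ioo (y t) (y ((a+b)/2)) := ⟨h, hpos⟩
          obtain ⟨s, hs, hys⟩ := intermediate_value_Ioo' htm.le cy.continuousOn h0
          exact hne s ⟨lt_trans hm.1 hs.1, lt_trans hs.2 ht.2⟩ hys
      · exact h
  rcases hsign with hpos | hneg
  · exact SZ.gap hT hbdd hq hy hode hab ha hb hpos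
  · have hode' : ∀ᵐ t ∂(volume : Measure ℝ),
        deriv (deriv (fun s => -y s)) t + q t * (-y t) = 0 := by
      filter_upwards [SZ.neg_ode (c := 0) (q := q) hy
        (by filter_upwards [hode] with t h; linarith)] with t h
      linarith
    have := SZ.gap hT hbdd hq hy.neg hode' hab (by simp [ha]) (by simp [hb])
      (fun t ht => by simpa using (hneg t ht))
    exact this

/-- A `T`-invariant set which is null on one window of length `T` is null. -/
lemma SZ.periodic_null {T : ℝ} (hT : 0 < T) {N : Set ℝ}
    (hinv : ∀ t, t ∈ N ↔ t + T ∈ N) {t₀ : ℝ}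
    (h0 : volume (N ∩ Ioo t₀ (t₀ + T)) = 0) : volume N = 0 := by
  have hp : Function.Periodic (fun t => t ∈ N) T := fun t => propext ((hinv t).symm)
  have hinv' : ∀ k : ℤ, ∀ t : ℝ, t + k*T ∈ N ↔ t ∈ N := fun k t =>
    iff_of_eq ((hp.int_mul k) t)
  have hbase : volume (N ∩ Ico t₀ (t₀ + T)) = 0 := by
    have hsub : N ∩ Ico t₀ (t₀ + T) ⊆ (N ∩ Ioo t₀ (t₀ + T)) ∪ {t₀} := by
      rintro u ⟨hu1, hu2, hu3⟩
      rcases eq_or_lt_of_le hu2 with h | h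
      · right; simp [h.symm]
      · left; exact ⟨hu1, h, hu3⟩
    exact measure_mono_null hsub (measure_union_null h0 (measure_singleton t₀))
  have key : ∀ k : ℤ, volume (N ∩ Ico (t₀ + k*T) (t₀ + k*T + T)) = 0 := by
    intro k
    have heq : N ∩ Ico (t₀ + k*T) (t₀ + k*T + T)
        = (fun u : ℝ => u + (-(k*T))) ⁻¹' (N ∩ Ico t₀ (t₀ + T)) := by
      ext u
      simp only [Set.mem_inter_iff, Set.mem_Ico, Set.mem_preimage]
      have hmem : u + (-(k*T)) ∈ N ↔ u ∈ N := by
        have := hinv' k (u + (-(k*T)))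
        simpa using this.symm
      constructor
      · rintro ⟨h1, h2, h3⟩
        exact ⟨hmem.mpr h1, by linarith, by linarith⟩
      · rintro ⟨h1, h2, h3⟩
        exact ⟨hmem.mp h1, by linarith, by linarith⟩
    rw [heq, measure_preimage_add_right]
    exact hbase
  have hcover : N ⊆ ⋃ k : ℤ, N ∩ Ico (t₀ + k*T) (t₀ + k*T + T) := by
    intro t ht
    obtain ⟨m, hm, -⟩ := existsUnique_add_zsmul_mem_Ico hT t t₀
    refine Set.mem_iUnion.mpr ⟨-m, ht, ?_⟩
    rw [zsmul_eq_mul] at hm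
    rcases hm with ⟨h1, h2⟩
    constructor
    · push_cast; linarith
    · push_cast; linarith
  exact measure_mono_null hcover (measure_iUnion_null key)

lemma SZ.exists_zero_between {y : ℝ → ℝ} (cy : Continuous y) {u v : ℝ} (h : y u * y v < 0) :
    ∃ s, ((u < s ∧ s < v) ∨ (v < s ∧ s < u)) ∧ y s = 0 := by
  rcases lt_trichotomy u v with h1 | h1 | h1
  · rcases mul_neg_iff.mp h with ⟨hu, hv⟩ | ⟨hu, hv⟩
    · obtain ⟨s, hs, hys⟩ := intermediate_value_Ioo' h1.le cy.continuousOn ⟨hv, hu⟩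
      exact ⟨s, Or.inl ⟨hs.1, hs.2⟩, hys⟩
    · obtain ⟨s, hs, hys⟩ := intermediate_value_Ioo h1.le cy.continuousOn ⟨hu, hv⟩
      exact ⟨s, Or.inl ⟨hs.1, hs.2⟩, hys⟩
  · exfalso; rw [h1] at h; nlinarith [sq_nonneg (y v)]
  · rcases mul_neg_iff.mp h with ⟨hu, hv⟩ | ⟨hu, hv⟩
    · obtain ⟨s, hs, hys⟩ := intermediate_value_Ioo h1.le cy.continuousOn ⟨hv, hu⟩
      exact ⟨s, Or.inr ⟨hs.1, hs.2⟩, hys⟩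
    · obtain ⟨s, hs, hys⟩ := intermediate_value_Ioo' h1.le cy.continuousOn ⟨hu, hv⟩
      exact ⟨s, Or.inr ⟨hs.1, hs.2⟩, hys⟩

/-- Nonvanishing: under `α ≪ (2π/T)² + c²/4`, a nontrivial `T`-periodic solution
of `x'' + c x' + α x = 0` has no zeros. -/
lemma SZ.nonvanishing {c T : ℝ} (hT : 0 < T) {α : ℝ → ℝ} {Cα : ℝ}
    (hper : Function.Periodic α T)
    (hbdd : ∀ᵐ t ∂(volume : Measure ℝ), |α t| ≤ Cα)
    (hub : ∀ᵐ t ∂(volume : Measure ℝ), α t ≤ (2*π)^2/T^2 + c^2/4)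
    (hstrict : 0 < volume {t ∈ Icc (0:ℝ) T | α t < (2*π)^2/T^2 + c^2/4})
    {x : ℝ → ℝ} (hx : ContDiff ℝ 2 x) (hperx : Function.Periodic x T)
    (hnt : ∃ t, x t ≠ 0)
    (hode : ∀ᵐ t ∂(volume : Measure ℝ), deriv (deriv x) t + c * deriv x t + α t * x t = 0) :
    ∀ t, x t ≠ 0 := by
  obtain ⟨hd1, hd2, hc2⟩ := SZ.deriv2 hx
  have cx : Continuous x := hx.continuous
  have cdx : Continuous (deriv x) := hd2.continuous
  set Q0 : ℝ := (2*π)^2/T^2 + c^2/4 with hQ0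
  set q : ℝ → ℝ := fun t => α t - c^2/4 with hqdef
  have hQeq : (2*π/T)^2 = (2*π)^2/T^2 := by rw [div_pow]
  set y : ℝ → ℝ := fun t => Real.exp (c*t/2) * x t with hydef
  have hexp : ContDiff ℝ 2 (fun t : ℝ => Real.exp (c*t/2)) :=
    Real.contDiff_exp.comp ((contDiff_const.mul contDiff_id).div_const 2)
  have hy2 : ContDiff ℝ 2 y := hexp.mul hx
  have cy : Continuous y := hy2.continuous
  have hed : ∀ t : ℝ, HasDerivAt (fun s => Real.exp (c*s/2)) (Real.exp (c*t/2) * (c/2)) t := by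
    intro t
    simpa using (((hasDerivAt_id t).const_mul c).div_const 2).exp
  have hyd : ∀ t, HasDerivAt y (Real.exp (c*t/2) * (c/2 * x t + deriv x t)) t := by
    intro t
    have := (hed t).mul (hd1 t).hasDerivAt
    exact this.congr_deriv (by ring)
  have hyderiv : deriv y = fun t => Real.exp (c*t/2) * (c/2 * x t + deriv x t) :=
    funext fun t => (hyd t).deriv
  have hydd : ∀ t, HasDerivAt (deriv y)
      (Real.exp (c*t/2) * (c^2/4 * x t + c * deriv x t + deriv (deriv x) t)) t := by
    intro t
    rw [hyderiv]
    have hin : HasDerivAt (fun s => c/2 * x s + deriv x s)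
        (c/2 * deriv x t + deriv (deriv x) t) t :=
      ((hd1 t).hasDerivAt.const_mul (c/2)).add (hd2 t).hasDerivAt
    have := (hed t).mul hin
    exact this.congr_deriv (by ring)
  have hodey : ∀ᵐ t ∂(volume : Measure ℝ), deriv (deriv y) t + q t * y t = 0 := by
    filter_upwards [hode] with t h
    rw [(hydd t).deriv]
    have e : Real.exp (c*t/2) * (c^2/4 * x t + c * deriv x t + deriv (deriv x) t)
        + q t * y t
        = Real.exp (c*t/2) * (deriv (deriv x) t + c * deriv x t + α t * x t) := by
      simp only [hqdef, hydef]
      ring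
    rw [e, h, mul_zero]
  have hodey0 : ∀ᵐ t ∂(volume : Measure ℝ),
      deriv (deriv y) t + 0 * deriv y t + q t * y t = 0 := by
    filter_upwards [hodey] with t h
    rw [zero_mul, add_zero]
    exact h
  have hqb : ∀ᵐ t ∂(volume : Measure ℝ), |q t| ≤ Cα + c^2/4 := by
    filter_upwards [hbdd] with t h
    simp only [hqdef]
    rw [abs_le] at h ⊢
    constructor <;> [nlinarith [sq_nonneg c]; nlinarith [sq_nonneg c]]
  have hq : ∀ᵐ t ∂(volume : Measure ℝ), q t ≤ (2*π/T)^2 := by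
    filter_upwards [hub] with t h
    rw [hQ0] at h
    simp only [hqdef]
    rw [hQeq]
    linarith
  have hμ : (0:ℝ) < Real.exp (c*T/2) := Real.exp_pos _
  have hyper : ∀ t, y (t + T) = Real.exp (c*T/2) * y t := by
    intro t
    simp only [hydef]
    rw [hperx t, show c*(t+T)/2 = c*t/2 + c*T/2 by ring, Real.exp_add]
    ring
  have hyper' : ∀ t, deriv y (t + T) = Real.exp (c*T/2) * deriv y t := by
    intro t
    rw [hyderiv]
    simp only
    rw [hperx t, SZ.periodic_deriv hperx t,
      show c*(t+T)/2 = c*t/2 + c*T/2 by ring, Real.exp_add]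
    ring
  have hxy : ∀ t, x t = 0 ↔ y t = 0 := by
    intro t
    simp only [hydef]
    constructor
    · intro h; rw [h, mul_zero]
    · intro h
      rcases mul_eq_zero.mp h with h | h
      · exact absurd h (Real.exp_pos _).ne'
      · exact h
  have hyd1 : Differentiable ℝ y := hy2.differentiable (by norm_num)
  intro t₀ hx0
  have hy0 : y t₀ = 0 := (hxy t₀).mp hx0
  have hy0T : y (t₀ + T) = 0 := by rw [hyper, hy0, mul_zero]
  have hd : deriv y t₀ ≠ 0 := by
    intro h0
    obtain ⟨s, hs⟩ := hnt
    have := SZ.unique (c := 0) hqb hy2 hodey0 hy0 h0 s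
    exact hs ((hxy s).mpr this)
  have hdT : deriv y (t₀ + T) ≠ 0 := by
    rw [hyper' t₀]
    exact mul_ne_zero hμ.ne' hd
  by_cases hzero : ∃ t₁, t₁ ∈ Ioo t₀ (t₀ + T) ∧ y t₁ = 0
  · -- Case A : an interior zero
    obtain ⟨t₁, ht₁, hyt₁⟩ := hzero
    have hevl := SZ.slope_pos (hyd1 t₀).hasDerivAt hy0 hd
    rw [eventually_nhdsWithin_iff] at hevl
    obtain ⟨ε, hε, hball⟩ := Metric.eventually_nhds_iff.mp hevl
    have hnearl : ∀ t, t ≠ t₀ → |t - t₀| < ε → y t ≠ 0 := by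
      intro t h1 h2 h3
      have := hball (by rwa [Real.dist_eq]) (by simpa using h1)
      rw [h3] at this
      simp at this
    have hevr := SZ.slope_pos (hyd1 (t₀+T)).hasDerivAt hy0T hdT
    rw [eventually_nhdsWithin_iff] at hevr
    obtain ⟨ε', hε', hball'⟩ := Metric.eventually_nhds_iff.mp hevr
    have hnearr : ∀ t, t ≠ t₀+T → |t - (t₀+T)| < ε' → y t ≠ 0 := by
      intro t h1 h2 h3
      have := hball' (by rwa [Real.dist_eq]) (by simpa using h1)
      rw [h3] at this
      simp at this
    set δ : ℝ := min (ε/2) ((t₁ - t₀)/2) with hδdef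
    have hδ : 0 < δ := lt_min (by linarith) (by linarith [ht₁.1])
    have hδle1 : δ ≤ ε/2 := min_le_left _ _
    have hδle2 : δ ≤ (t₁ - t₀)/2 := min_le_right _ _
    set K : Set ℝ := Icc (t₀+δ) (t₀+T) ∩ {t | y t = 0} with hKdef
    have hKclosed : IsClosed K := isClosed_Icc.inter (isClosed_eq cy continuous_const)
    have hKcompact : IsCompact K :=
      isCompact_Icc.of_isClosed_subset hKclosed Set.inter_subset_left
    have ht₁K : t₁ ∈ K := ⟨⟨by linarith [ht₁.1], ht₁.2.le⟩, hyt₁⟩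
    set b := sInf K with hbdef
    have hbK : b ∈ K := hKcompact.sInf_mem ⟨t₁, ht₁K⟩
    have hbley : b ≤ t₁ := csInf_le hKcompact.bddBelow ht₁K
    have ht₀b : t₀ < b := by linarith [hbK.1.1]
    have hyb : y b = 0 := hbK.2
    have hneleft : ∀ t ∈ Ioo t₀ b, y t ≠ 0 := by
      intro t ht
      rcases lt_or_ge t (t₀+δ) with h | h
      · apply hnearl t (ne_of_gt ht.1)
        rw [abs_of_pos (by linarith [ht.1] : (0:ℝ) < t - t₀)]
        linarith
      · intro h0
        have htK : t ∈ K := ⟨⟨h, by linarith [ht.2, hbK.1.2]⟩, h0⟩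
        have := csInf_le hKcompact.bddBelow htK
        linarith [ht.2]
    set δ' : ℝ := min (ε'/2) ((t₀+T-t₁)/2) with hδ'def
    have hδ'pos : 0 < δ' := lt_min (by linarith) (by linarith [ht₁.2])
    have hδ'le1 : δ' ≤ ε'/2 := min_le_left _ _
    have hδ'le2 : δ' ≤ (t₀+T-t₁)/2 := min_le_right _ _
    set K' : Set ℝ := Icc t₀ (t₀+T-δ') ∩ {t | y t = 0} with hK'def
    have hK'closed : IsClosed K' := isClosed_Icc.inter (isClosed_eq cy continuous_const)
    have hK'compact : IsCompact K' :=
      isCompact_Icc.of_isClosed_subset hK'closed Set.inter_subset_left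
    have ht₁K' : t₁ ∈ K' := ⟨⟨ht₁.1.le, by linarith [ht₁.2]⟩, hyt₁⟩
    set b' := sSup K' with hb'def
    have hb'K : b' ∈ K' := hK'compact.sSup_mem ⟨t₁, ht₁K'⟩
    have hb'ge : t₁ ≤ b' := le_csSup hK'compact.bddAbove ht₁K'
    have hb'lt : b' < t₀ + T := by linarith [hb'K.1.2]
    have hyb' : y b' = 0 := hb'K.2
    have hneright : ∀ t ∈ Ioo b' (t₀+T), y t ≠ 0 := by
      intro t ht
      rcases lt_or_ge (t₀+T-δ') t with h | h
      · apply hnearr t (ne_of_lt ht.2)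
        rw [abs_of_neg (by linarith [ht.2] : t - (t₀+T) < 0)]
        linarith
      · intro h0
        have htK : t ∈ K' := ⟨⟨by linarith [ht.1, hb'K.1.1], h⟩, h0⟩
        have := le_csSup hK'compact.bddAbove htK
        linarith [ht.1]
    obtain ⟨hg1, hg1e⟩ := SZ.gap' hT hqb hq hy2 hodey ht₀b hy0 hyb hneleft
    obtain ⟨hg2, hg2e⟩ := SZ.gap' hT hqb hq hy2 hodey hb'lt hyb' hy0T hneright
    have hbb' : b ≤ b' := le_trans hbley hb'ge
    have he1 : b - t₀ = T/2 := by linarith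
    have he2 : (t₀+T) - b' = T/2 := by linarith
    have hbeq : b = b' := by linarith
    have hae1 := hg1e he1
    have hae2 := hg2e he2
    have hneb : ∀ᵐ t : ℝ ∂(volume : Measure ℝ), t ≠ b := by
      rw [ae_iff]
      have heqs : {t : ℝ | ¬ t ≠ b} = {b} := by ext u; simp
      rw [heqs]
      exact measure_singleton b
    have haefull : ∀ᵐ t ∂(volume : Measure ℝ), t ∈ Ioo t₀ (t₀+T) → q t = (2*π/T)^2 := by
      filter_upwards [hae1, hae2, hneb] with t h1 h2 h3 ht
      rcases lt_or_gt_of_ne h3 with h | h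
      · exact h1 ⟨ht.1, h⟩
      · exact h2 ⟨by rw [← hbeq]; exact h, ht.2⟩
    set N : Set ℝ := {t | α t ≠ Q0} with hNdef
    have hinv : ∀ t, t ∈ N ↔ t + T ∈ N := by
      intro t
      simp only [hNdef, Set.mem_setOf_eq]
      rw [hper t]
    have hnull : volume (N ∩ Ioo t₀ (t₀+T)) = 0 := by
      refine measure_mono_null ?_ (ae_iff.mp haefull)
      rintro u ⟨hu1, hu2⟩
      simp only [Set.mem_setOf_eq, Classical.not_imp]
      refine ⟨hu2, fun hq' => hu1 ?_⟩
      simp only [hqdef] at hq'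
      rw [hQ0]
      rw [hQeq] at hq'
      linarith
    have hNnull : volume N = 0 := SZ.periodic_null hT hinv hnull
    have hsub : {t | t ∈ Icc (0:ℝ) T ∧ α t < Q0} ⊆ N := by
      rintro u ⟨-, hu⟩
      exact ne_of_lt hu
    have hfin := measure_mono_null hsub hNnull
    rw [hfin] at hstrict
    exact lt_irrefl _ hstrict
  · -- Case B : no interior zero
    push_neg at hzero
    have hevl := SZ.slope_pos (hyd1 t₀).hasDerivAt hy0 hd
    have hevr := SZ.slope_pos (hyd1 (t₀+T)).hasDerivAt hy0T hdT
    -- choose a point close to t₀ on the right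
    have hIool : Ioo t₀ (t₀+T) ∈ nhdsWithin t₀ (Ioi t₀) :=
      Ioo_mem_nhdsGT_of_mem ⟨le_refl t₀, by linarith⟩
    have hevl' : ∀ᶠ t in nhdsWithin t₀ (Ioi t₀), 0 < (y t / (t - t₀)) * deriv y t₀ :=
      hevl.filter_mono (nhdsWithin_mono t₀ (fun t ht => ne_of_gt ht))
    obtain ⟨ta, hta1, hta2⟩ := (hevl'.and hIool).exists
    have hIoor : Ioo t₀ (t₀+T) ∈ nhdsWithin (t₀+T) (Iio (t₀+T)) :=
      Ioo_mem_nhdsLT_of_mem ⟨by linarith, le_refl _⟩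
    have hevr' : ∀ᶠ t in nhdsWithin (t₀+T) (Iio (t₀+T)),
        0 < (y t / (t - (t₀+T))) * deriv y (t₀+T) :=
      hevr.filter_mono (nhdsWithin_mono _ (fun t ht => ne_of_lt ht))
    obtain ⟨tb, htb1, htb2⟩ := (hevr'.and hIoor).exists
    -- signs
    have hta3 : 0 < y ta * deriv y t₀ := by
      have hpos : 0 < ta - t₀ := by linarith [hta2.1]
      have e : y ta * deriv y t₀ = (y ta / (ta - t₀) * deriv y t₀) * (ta - t₀) := by
        field_simp
      rw [e]
      exact mul_pos hta1 hpos
    have htb3 : y tb * deriv y (t₀+T) < 0 := by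
      have hneg : tb - (t₀+T) < 0 := by linarith [htb2.2]
      have hne0 : tb - (t₀+T) ≠ 0 := ne_of_lt hneg
      have e : y tb * deriv y (t₀+T) = (y tb / (tb - (t₀+T)) * deriv y (t₀+T)) * (tb - (t₀+T)) := by
        field_simp
      rw [e]
      exact mul_neg_of_pos_of_neg htb1 hneg
    have htb4 : y tb * deriv y t₀ < 0 := by
      rw [hyper' t₀] at htb3
      nlinarith
    have hprod : y ta * y tb < 0 := by
      have h1 : 0 < (y ta * deriv y t₀) * (-(y tb * deriv y t₀)) :=
        mul_pos hta3 (by linarith)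
      have h2 : (y ta * deriv y t₀) * (-(y tb * deriv y t₀))
          = -(y ta * y tb) * (deriv y t₀)^2 := by ring
      rw [h2] at h1
      nlinarith [sq_nonneg (deriv y t₀), sq_abs (deriv y t₀)]
    obtain ⟨s, hs, hys⟩ := SZ.exists_zero_between cy hprod
    rcases hs with ⟨h1, h2⟩ | ⟨h1, h2⟩
    · exact hzero s ⟨lt_trans hta2.1 h1, lt_trans h2 htb2.2⟩ hys
    · exact hzero s ⟨lt_trans htb2.1 h1, lt_trans h2 hta2.2⟩ hys

/-- Comparison: if both equations have positive (after sign normalization) periodic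
solutions and `α₁ ≤ α₂` a.e., then `α₁ = α₂` a.e.; strictness gives a contradiction. -/
lemma SZ.compare {c T : ℝ} (hT : 0 < T) {α₁ α₂ : ℝ → ℝ}
    (hper₁ : Function.Periodic α₁ T) (hper₂ : Function.Periodic α₂ T)
    (h12 : ∀ᵐ t ∂(volume : Measure ℝ), α₁ t ≤ α₂ t)
    (h12strict : 0 < volume {t ∈ Icc (0:ℝ) T | α₁ t < α₂ t})
    {x₁ x₂ : ℝ → ℝ} (hx₁ : ContDiff ℝ 2 x₁) (hx₂ : ContDiff ℝ 2 x₂)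
    (hpx₁ : Function.Periodic x₁ T) (hpx₂ : Function.Periodic x₂ T)
    (hode₁ : ∀ᵐ t ∂(volume : Measure ℝ),
      deriv (deriv x₁) t + c * deriv x₁ t + α₁ t * x₁ t = 0)
    (hode₂ : ∀ᵐ t ∂(volume : Measure ℝ),
      deriv (deriv x₂) t + c * deriv x₂ t + α₂ t * x₂ t = 0)
    (hnz₁ : ∀ t, x₁ t ≠ 0) (hpos : ∀ t, 0 < x₁ t * x₂ t) : False := by
  obtain ⟨hd11, hd21, hc21⟩ := SZ.deriv2 hx₁
  obtain ⟨hd12, hd22, hc22⟩ := SZ.deriv2 hx₂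
  have cx₁ : Continuous x₁ := hx₁.continuous
  have cx₂ : Continuous x₂ := hx₂.continuous
  have cdx₁ : Continuous (deriv x₁) := hd21.continuous
  have cdx₂ : Continuous (deriv x₂) := hd22.continuous
  -- Rolle for x₂/x₁
  have hρcont : ContinuousOn (fun t => x₂ t / x₁ t) (Icc 0 T) :=
    (cx₂.div cx₁ hnz₁).continuousOn
  have hρeq : x₂ 0 / x₁ 0 = x₂ T / x₁ T := by
    have h1 : x₂ T = x₂ 0 := by have := hpx₂ 0; rwa [zero_add] at this
    have h2 : x₁ T = x₁ 0 := by have := hpx₁ 0; rwa [zero_add] at this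
    rw [h1, h2]
  obtain ⟨t₀, ht₀, hρ'⟩ := exists_deriv_eq_zero hT hρcont hρeq
  have hρd : HasDerivAt (fun t => x₂ t / x₁ t)
      ((deriv x₂ t₀ * x₁ t₀ - x₂ t₀ * deriv x₁ t₀) / x₁ t₀ ^ 2) t₀ :=
    (hd12 t₀).hasDerivAt.div (hd11 t₀).hasDerivAt (hnz₁ t₀)
  have hW0 : x₁ t₀ * deriv x₂ t₀ - deriv x₁ t₀ * x₂ t₀ = 0 := by
    have h1 : (deriv x₂ t₀ * x₁ t₀ - x₂ t₀ * deriv x₁ t₀) / x₁ t₀ ^ 2 = 0 := by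
      rw [← hρd.deriv]; exact hρ'
    rcases div_eq_zero_iff.mp h1 with h | h
    · linarith
    · exact absurd h (pow_ne_zero 2 (hnz₁ t₀))
  set W : ℝ → ℝ := fun t => x₁ t * deriv x₂ t - deriv x₁ t * x₂ t with hWdef
  set v : ℝ → ℝ := fun t => Real.exp (c*t) * W t with hvdef
  have hWd : ∀ t, HasDerivAt W
      (x₁ t * deriv (deriv x₂) t - deriv (deriv x₁) t * x₂ t) t := by
    intro t
    have h1 := (hd11 t).hasDerivAt.mul (hd22 t).hasDerivAt
    have h2 := (hd21 t).hasDerivAt.mul (hd12 t).hasDerivAt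
    have h3 := h1.sub h2
    exact h3.congr_deriv (by ring)
  have hed : ∀ t : ℝ, HasDerivAt (fun s => Real.exp (c*s)) (Real.exp (c*t) * c) t := by
    intro t
    simpa using ((hasDerivAt_id t).const_mul c).exp
  have hvd : ∀ t, HasDerivAt v
      (Real.exp (c*t) * (c * W t
        + (x₁ t * deriv (deriv x₂) t - deriv (deriv x₁) t * x₂ t))) t := by
    intro t
    have := (hed t).mul (hWd t)
    exact this.congr_deriv (by simp only [hWdef]; ring)
  have hvderiv : ∀ t, deriv v t = Real.exp (c*t) * (c * W t
      + (x₁ t * deriv (deriv x₂) t - deriv (deriv x₁) t * x₂ t)) := fun t => (hvd t).deriv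
  have hvcont : Continuous (fun t => deriv v t) := by
    simp only [hvderiv, hWdef]
    fun_prop
  have haev : ∀ᵐ t ∂(volume : Measure ℝ),
      deriv v t = Real.exp (c*t) * ((α₁ t - α₂ t) * (x₁ t * x₂ t)) := by
    filter_upwards [hode₁, hode₂] with t h1 h2
    rw [hvderiv]
    have e₁ : deriv (deriv x₁) t = -(c * deriv x₁ t + α₁ t * x₁ t) := by linarith
    have e₂ : deriv (deriv x₂) t = -(c * deriv x₂ t + α₂ t * x₂ t) := by linarith
    rw [e₁, e₂]
    simp only [hWdef]
    ring
  have haele : ∀ᵐ t ∂(volume : Measure ℝ), deriv v t ≤ 0 := by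
    filter_upwards [haev, h12] with t h1 h2
    rw [h1]
    have h3 : (α₁ t - α₂ t) * (x₁ t * x₂ t) ≤ 0 :=
      mul_nonpos_iff.mpr (Or.inr ⟨by linarith, (hpos t).le⟩)
    exact mul_nonpos_iff.mpr (Or.inl ⟨(Real.exp_pos _).le, h3⟩)
  have hle : ∀ t, deriv v t ≤ 0 := by
    have := SZ.ae_imp_le (f := fun t => deriv v t) (g := fun _ => (0:ℝ))
      hvcont continuous_const isOpen_univ
      (by filter_upwards [haele] with t h _; exact h)
    exact fun t => this t (mem_univ t)
  have hanti : Antitone v :=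
    antitone_of_deriv_nonpos (fun t => (hvd t).differentiableAt) hle
  have hv0 : v t₀ = 0 := by
    simp only [hvdef, hWdef]
    rw [hW0, mul_zero]
  have hWper : W (t₀ + T) = W t₀ := by
    simp only [hWdef]
    rw [hpx₁ t₀, hpx₂ t₀, SZ.periodic_deriv hpx₁ t₀, SZ.periodic_deriv hpx₂ t₀]
  have hvT : v (t₀ + T) = 0 := by
    simp only [hvdef]
    simp only [hvdef, hWdef] at hv0 hWper ⊢
    rw [hWper]
    rcases mul_eq_zero.mp hv0 with h | h
    · exact absurd h (Real.exp_pos _).ne'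
    · rw [h, mul_zero]
  have hvzero : ∀ t ∈ Icc t₀ (t₀ + T), v t = 0 := by
    intro t ht
    have h1 : v t ≤ v t₀ := hanti ht.1
    have h2 : v (t₀ + T) ≤ v t := hanti ht.2
    rw [hv0] at h1; rw [hvT] at h2
    linarith
  have hvderiv0 : ∀ t ∈ Ioo t₀ (t₀ + T), deriv v t = 0 := by
    intro t ht
    have hev : v =ᶠ[nhds t] (fun _ => (0:ℝ)) := by
      filter_upwards [isOpen_Ioo.mem_nhds ht] with s hs
      exact hvzero s (Ioo_subset_Icc_self hs)
    rw [hev.deriv_eq, deriv_const]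
  have hae : ∀ᵐ t ∂(volume : Measure ℝ), t ∈ Ioo t₀ (t₀ + T) → α₁ t = α₂ t := by
    filter_upwards [haev] with t h1 ht
    have h2 : Real.exp (c*t) * ((α₁ t - α₂ t) * (x₁ t * x₂ t)) = 0 := by
      rw [← h1]; exact hvderiv0 t ht
    rcases mul_eq_zero.mp h2 with h | h
    · exact absurd h (Real.exp_pos _).ne'
    · rcases mul_eq_zero.mp h with h | h
      · linarith
      · exact absurd h (hpos t).ne'
  set N : Set ℝ := {t | α₁ t ≠ α₂ t} with hNdef
  have hinv : ∀ t, t ∈ N ↔ t + T ∈ N := by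
    intro t
    simp only [hNdef, Set.mem_setOf_eq]
    rw [hper₁ t, hper₂ t]
  have hnull : volume (N ∩ Ioo t₀ (t₀ + T)) = 0 := by
    refine measure_mono_null ?_ (ae_iff.mp hae)
    rintro u ⟨hu1, hu2⟩
    simp only [Set.mem_setOf_eq, Classical.not_imp]
    exact ⟨hu2, hu1⟩
  have hNnull : volume N = 0 := SZ.periodic_null hT hinv hnull
  have hsub : {t | t ∈ Icc (0:ℝ) T ∧ α₁ t < α₂ t} ⊆ N := by
    rintro u ⟨-, hu⟩
    exact ne_of_lt hu
  have hfin := measure_mono_null hsub hNnull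
  rw [hfin] at h12strict
  exact lt_irrefl _ h12strict

/-- If `α₁ ≪ α₂ ≪ (2π)²/T² + c²/4`, then the equations `x'' + c x' + αᵢ x = 0` cannot both
admit nontrivial `T`-periodic solutions. -/
theorem stmt5 (c T : ℝ) (hT : 0 < T) (α₁ α₂ : ℝ → ℝ)
    (hmeas₁ : Measurable α₁) (hmeas₂ : Measurable α₂)
    (hper₁ : Function.Periodic α₁ T) (hper₂ : Function.Periodic α₂ T)
    (hbdd₁ : ∃ C : ℝ, ∀ᵐ t ∂(volume : Measure ℝ), |α₁ t| ≤ C)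
    (hbdd₂ : ∃ C : ℝ, ∀ᵐ t ∂(volume : Measure ℝ), |α₂ t| ≤ C)
    (h12 : ∀ᵐ t ∂(volume : Measure ℝ), α₁ t ≤ α₂ t)
    (h12strict : 0 < volume {t ∈ Icc (0 : ℝ) T | α₁ t < α₂ t})
    (hub : ∀ᵐ t ∂(volume : Measure ℝ), α₂ t ≤ (2 * π) ^ 2 / T ^ 2 + c ^ 2 / 4)
    (hubstrict : 0 < volume {t ∈ Icc (0 : ℝ) T | α₂ t < (2 * π) ^ 2 / T ^ 2 + c ^ 2 / 4}) :
    ¬ ((∃ x₁ : ℝ → ℝ, ContDiff ℝ 2 x₁ ∧ Function.Periodic x₁ T ∧ (∃ t, x₁ t ≠ 0) ∧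
          ∀ᵐ t ∂(volume : Measure ℝ),
            deriv (deriv x₁) t + c * deriv x₁ t + α₁ t * x₁ t = 0) ∧
        (∃ x₂ : ℝ → ℝ, ContDiff ℝ 2 x₂ ∧ Function.Periodic x₂ T ∧ (∃ t, x₂ t ≠ 0) ∧
          ∀ᵐ t ∂(volume : Measure ℝ),
            deriv (deriv x₂) t + c * deriv x₂ t + α₂ t * x₂ t = 0)) := by
  rintro ⟨⟨x₁, hx₁, hpx₁, hnt₁, hode₁⟩, ⟨x₂, hx₂, hpx₂, hnt₂, hode₂⟩⟩
  obtain ⟨C₁, hC₁⟩ := hbdd₁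
  obtain ⟨C₂, hC₂⟩ := hbdd₂
  -- bound and strictness for α₁
  have hub₁ : ∀ᵐ t ∂(volume : Measure ℝ), α₁ t ≤ (2 * π) ^ 2 / T ^ 2 + c ^ 2 / 4 := by
    filter_upwards [h12, hub] with t h1 h2
    linarith
  have hubstrict₁ : 0 < volume {t ∈ Icc (0 : ℝ) T | α₁ t < (2 * π) ^ 2 / T ^ 2 + c ^ 2 / 4} := by
    have hbadnull : (volume : Measure ℝ) {t : ℝ | ¬ α₁ t ≤ α₂ t} = 0 := by
      have h := h12
      rw [ae_iff] at h
      exact h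
    have hsub : {t ∈ Icc (0 : ℝ) T | α₂ t < (2 * π) ^ 2 / T ^ 2 + c ^ 2 / 4}
        ⊆ {t ∈ Icc (0 : ℝ) T | α₁ t < (2 * π) ^ 2 / T ^ 2 + c ^ 2 / 4}
          ∪ {t : ℝ | ¬ α₁ t ≤ α₂ t} := by
      rintro u ⟨hu1, hu2⟩
      by_cases h : α₁ u ≤ α₂ u
      · left; exact ⟨hu1, by linarith⟩
      · right; exact h
    have h1 := (measure_mono (μ := (volume : Measure ℝ)) hsub).trans (measure_union_le _ _)
    rw [hbadnull, add_zero] at h1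
    exact lt_of_lt_of_le hubstrict h1
  -- both solutions are nonvanishing
  have hnz₁ : ∀ t, x₁ t ≠ 0 :=
    SZ.nonvanishing hT hper₁ hC₁ hub₁ hubstrict₁ hx₁ hpx₁ hnt₁ hode₁
  have hnz₂ : ∀ t, x₂ t ≠ 0 :=
    SZ.nonvanishing hT hper₂ hC₂ hub hubstrict hx₂ hpx₂ hnt₂ hode₂
  -- the product x₁ x₂ has constant sign
  have hpne : ∀ t, x₁ t * x₂ t ≠ 0 := fun t => mul_ne_zero (hnz₁ t) (hnz₂ t)
  have hc : Continuous fun t => x₁ t * x₂ t := hx₁.continuous.mul hx₂.continuous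
  have hsign : (∀ t, 0 < x₁ t * x₂ t) ∨ (∀ t, x₁ t * x₂ t < 0) := by
    rcases (hpne 0).lt_or_gt with h0 | h0
    · right
      intro t
      rcases (hpne t).lt_or_gt with h | h
      · exact h
      · exfalso
        have hprod : (x₁ t * x₂ t) * (x₁ 0 * x₂ 0) < 0 :=
          mul_neg_of_pos_of_neg h h0
        obtain ⟨s, -, hs⟩ := SZ.exists_zero_between hc hprod
        exact hpne s hs
    · left
      intro t
      rcases (hpne t).lt_or_gt with h | h
      · exfalso
        have hprod : (x₁ t * x₂ t) * (x₁ 0 * x₂ 0) < 0 :=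
          mul_neg_of_neg_of_pos h h0
        obtain ⟨s, -, hs⟩ := SZ.exists_zero_between hc hprod
        exact hpne s hs
      · exact h
  rcases hsign with hpos | hneg
  · exact SZ.compare hT hper₁ hper₂ h12 h12strict hx₁ hx₂ hpx₁ hpx₂ hode₁ hode₂ hnz₁ hpos
  · -- replace x₂ by -x₂
    have hode₂' : ∀ᵐ t ∂(volume : Measure ℝ),
        deriv (deriv (fun s => -x₂ s)) t + c * deriv (fun s => -x₂ s) t
          + α₂ t * (-x₂ t) = 0 := SZ.neg_ode hx₂ hode₂
    have hpos' : ∀ t, 0 < x₁ t * (-(x₂ t)) := by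
      intro t
      have := hneg t
      nlinarith
    have hpx₂' : Function.Periodic (fun s => -x₂ s) T := fun t => by simp [hpx₂ t]
    exact SZ.compare hT hper₁ hper₂ h12 h12strict hx₁ hx₂.neg hpx₁ hpx₂' hode₁
      (by filter_upwards [hode₂'] with t h; simpa using h) hnz₁ hpos'
end
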